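/- arXiv:1602.01675 — 7 statements merged into one kernel-verified Lean document; each statement's English description precedes it below -/
import Mathlib

section
/- Let V : ℝ^d → ℝ be twice continuously differentiable and set f(q) = −∇V(q), and let h > 0. Let Ā : [0,1]×[0,1] → ℝ and B̄, B̂, C : [0,1] → ℝ be continuous coefficient functions satisfying the symplectic conditions (i) B̂(τ)(1 − C(τ)) = B̄(τ) for all τ and (ii) B̂(τ)(B̄(σ) − Ā(τ,σ)) = B̂(σ)(B̄(τ) − Ā(σ,τ)) for all τ, σ. Suppose Q : [0,1] → (ℝ^d × ℝ^d) → ℝ^d is such that (τ, z) ↦ Q(τ)(z) is continuous, z ↦ Q(τ)(z) is continuously differentiable with (τ, z) ↦ D_z Q(τ)(z) jointly continuous, and for all τ ∈ [0,1] and all z = (p, q): Q(τ)(p,q) = q + h·C(τ)·p + h²·∫₀¹ Ā(τ,σ)·f(Q(σ)(p,q)) dσ. Define the one-step map Φ(p,q) = (p + h·∫₀¹ B̂(τ)·f(Q(τ)(p,q)) dτ, q + h·p + h²·∫₀¹ B̄(τ)·f(Q(τ)(p,q)) dτ). Then Φ is symplectic: for every z and all tangent vectors u = (u_p, u_q), v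 = (v_p, v_q) in ℝ^d × ℝ^d, writing DΦ(z)u = (u_p', u_q') and DΦ(z)v = (v_p', v_q'), one has ⟨u_p', v_q'⟩ − ⟨v_p', u_q'⟩ = ⟨u_p, v_q⟩ − ⟨v_p, u_q⟩. -/
open intervalIntegral RealInnerProductSpace

section helpers

open MeasureTheory Set Metric
open scoped Interval

variable {G : Type*} [NormedAddCommGroup G] [NormedSpace ℝ G]
variable {E' : Type*} [NormedAddCommGroup E'] [NormedSpace ℝ E']

lemma contOn_Icc_intervalIntegrable {g : ℝ → E'} (hg : ContinuousOn g (Set.Icc 0 1)) :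
    IntervalIntegrable g MeasureTheory.volume 0 1 := by
  apply ContinuousOn.intervalIntegrable
  rwa [Set.uIcc_of_le zero_le_one]

lemma aemeas_of_contOn {g : ℝ → E'} (hg : ContinuousOn g (Set.Icc 0 1)) :
    AEStronglyMeasurable g (MeasureTheory.volume.restrict (Ι (0:ℝ) 1)) := by
  have h1 : Ι (0:ℝ) 1 = Set.Ioc 0 1 := Set.uIoc_of_le zero_le_one
  rw [h1]
  exact (hg.mono Set.Ioc_subset_Icc_self).aestronglyMeasurable measurableSet_Ioc

lemma slice_contOn {f2 : ℝ × G → E'} (hf : ContinuousOn f2 (Set.Icc 0 1 ×ˢ Set.univ)) (w : G) :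
    ContinuousOn (fun τ => f2 (τ, w)) (Set.Icc (0:ℝ) 1) :=
  hf.comp ((continuous_id.prodMk continuous_const).continuousOn)
    (fun τ hτ => ⟨hτ, trivial⟩)

lemma hasFDerivAt_param [ProperSpace G] [CompleteSpace E']
    {F : ℝ → G → E'} {F' : ℝ → G → G →L[ℝ] E'} (z₀ : G)
    (hF : ContinuousOn (fun x : ℝ × G => F x.1 x.2) (Set.Icc 0 1 ×ˢ Set.univ))
    (hF' : ContinuousOn (fun x : ℝ × G => F' x.1 x.2) (Set.Icc 0 1 ×ˢ Set.univ))
    (hd : ∀ τ ∈ Set.Icc (0:ℝ) 1, ∀ w, HasFDerivAt (F τ) (F' τ w) w) :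
    HasFDerivAt (fun w => ∫ τ in (0:ℝ)..1, F τ w) (∫ τ in (0:ℝ)..1, F' τ z₀) z₀ := by
  obtain ⟨M, hM⟩ : ∃ M, ∀ x ∈ (Set.Icc (0:ℝ) 1) ×ˢ closedBall z₀ 1, ‖F' x.1 x.2‖ ≤ M :=
    (isCompact_Icc.prod (isCompact_closedBall z₀ 1)).exists_bound_of_continuousOn
      (hF'.mono (fun x hx => ⟨hx.1, trivial⟩))
  have hIcc : Ι (0:ℝ) 1 ⊆ Set.Icc 0 1 := by
    rw [Set.uIoc_of_le zero_le_one]; exact Set.Ioc_subset_Icc_self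
  refine hasFDerivAt_integral_of_dominated_of_fderiv_le''
    (F := fun w τ => F τ w) (F' := fun w τ => F' τ w) (bound := fun _ => M)
    (s := ball z₀ 1) (ball_mem_nhds z₀ one_pos) ?_ ?_ ?_ ?_ ?_ ?_
  · exact Filter.Eventually.of_forall fun w => aemeas_of_contOn (slice_contOn hF w)
  · exact contOn_Icc_intervalIntegrable (slice_contOn hF z₀)
  · exact aemeas_of_contOn (slice_contOn hF' z₀)
  · refine (MeasureTheory.ae_restrict_mem measurableSet_uIoc).mono (fun t ht x hx => ?_)
    exact hM (t, x) ⟨hIcc ht, ball_subset_closedBall hx⟩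
  · exact intervalIntegrable_const
  · refine (MeasureTheory.ae_restrict_mem measurableSet_uIoc).mono (fun t ht x _ => ?_)
    exact hd t (hIcc ht) x

lemma contOn_param {g : ℝ → ℝ → E'}
    (hg : ContinuousOn (fun p : ℝ × ℝ => g p.1 p.2) (Set.Icc 0 1 ×ˢ Set.Icc 0 1)) :
    ContinuousOn (fun τ => ∫ σ in (0:ℝ)..1, g τ σ) (Set.Icc (0:ℝ) 1) := by
  obtain ⟨M, hM⟩ : ∃ M, ∀ x ∈ (Set.Icc (0:ℝ) 1) ×ˢ (Set.Icc (0:ℝ) 1), ‖g x.1 x.2‖ ≤ M :=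
    (isCompact_Icc.prod isCompact_Icc).exists_bound_of_continuousOn hg
  have hIcc : Ι (0:ℝ) 1 ⊆ Set.Icc 0 1 := by
    rw [Set.uIoc_of_le zero_le_one]; exact Set.Ioc_subset_Icc_self
  rw [continuousOn_iff_continuous_restrict]
  refine continuous_of_dominated_interval (bound := fun _ => M) ?_ ?_ ?_ ?_
  · intro x
    have h1 : ContinuousOn (fun σ : ℝ => (((x : ℝ), σ) : ℝ × ℝ)) (Set.Icc 0 1) :=
      (continuous_const.prodMk continuous_id).continuousOn
    exact aemeas_of_contOn (hg.comp h1 (fun σ hσ => ⟨x.2, hσ⟩))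
  · intro x
    exact Filter.Eventually.of_forall (fun t ht => hM (↑x, t) ⟨x.2, hIcc ht⟩)
  · exact intervalIntegrable_const
  · refine Filter.Eventually.of_forall (fun t ht => ?_)
    exact hg.comp_continuous (continuous_subtype_val.prodMk continuous_const)
      (fun x => ⟨x.2, hIcc ht⟩)

end helpers

section helpers2
open MeasureTheory Set Metric

variable {E' : Type*} [NormedAddCommGroup E'] [InnerProductSpace ℝ E'] [CompleteSpace E']

lemma swap01 {g : ℝ → ℝ → ℝ}
    (hg : ContinuousOn (fun p : ℝ × ℝ => g p.1 p.2) (Set.Icc 0 1 ×ˢ Set.Icc 0 1)) :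
    ∫ τ in (0:ℝ)..1, ∫ σ in (0:ℝ)..1, g τ σ = ∫ σ in (0:ℝ)..1, ∫ τ in (0:ℝ)..1, g τ σ := by
  have h1 : ∀ (g' : ℝ → ℝ), ∫ x in (0:ℝ)..1, g' x = ∫ x in Set.Ioc (0:ℝ) 1, g' x :=
    fun g' => intervalIntegral.integral_of_le zero_le_one
  simp_rw [h1]
  have hint : Integrable (Function.uncurry g)
      ((volume.restrict (Set.Ioc (0:ℝ) 1)).prod (volume.restrict (Set.Ioc (0:ℝ) 1))) := by
    rw [MeasureTheory.Measure.prod_restrict]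
    refine (MeasureTheory.IntegrableOn.mono_set ?_
      (Set.prod_mono Set.Ioc_subset_Icc_self Set.Ioc_subset_Icc_self))
    exact hg.integrableOn_compact (isCompact_Icc.prod isCompact_Icc)
  exact MeasureTheory.integral_integral_swap hint

lemma inner_intervalIntegral {g : ℝ → E'} (c : E')
    (hg : IntervalIntegrable g volume 0 1) :
    ⟪c, (∫ τ in (0:ℝ)..1, g τ)⟫ = ∫ τ in (0:ℝ)..1, ⟪c, g τ⟫ :=
  ((innerSL ℝ c).intervalIntegral_comp_comm hg).symm

lemma intervalIntegral_inner {g : ℝ → E'} (c : E')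
    (hg : IntervalIntegrable g volume 0 1) :
    ⟪(∫ τ in (0:ℝ)..1, g τ), c⟫ = ∫ τ in (0:ℝ)..1, ⟪g τ, c⟫ := by
  rw [real_inner_comm, inner_intervalIntegral c hg]
  simp_rw [real_inner_comm]

end helpers2

set_option maxHeartbeats 2000000 in
/-- A continuous-stage Runge–Kutta–Nyström method whose coefficients
satisfy the symplectic conditions produces a symplectic one-step map for the second-order
system `q̈ = f(q)` with `f = -∇V`. -/
theorem csRKN_symplectic
    (d : ℕ) (V : EuclideanSpace ℝ (Fin d) → ℝ) (hV : ContDiff ℝ 2 V)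
    (f : EuclideanSpace ℝ (Fin d) → EuclideanSpace ℝ (Fin d))
    (hf : ∀ q, f q = -gradient V q)
    (h : ℝ) (hh : 0 < h)
    (A : ℝ → ℝ → ℝ) (Bbar Bhat C : ℝ → ℝ)
    (hA : ContinuousOn (fun p : ℝ × ℝ => A p.1 p.2) (Set.Icc 0 1 ×ˢ Set.Icc 0 1))
    (hBbar : ContinuousOn Bbar (Set.Icc 0 1))
    (hBhat : ContinuousOn Bhat (Set.Icc 0 1))
    (hC : ContinuousOn C (Set.Icc 0 1))
    (hsym1 : ∀ τ ∈ Set.Icc (0:ℝ) 1, Bhat τ * (1 - C τ) = Bbar τ)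
    (hsym2 : ∀ τ ∈ Set.Icc (0:ℝ) 1, ∀ σ ∈ Set.Icc (0:ℝ) 1,
      Bhat τ * (Bbar σ - A τ σ) = Bhat σ * (Bbar τ - A σ τ))
    (Q : ℝ → EuclideanSpace ℝ (Fin d) × EuclideanSpace ℝ (Fin d) → EuclideanSpace ℝ (Fin d))
    (hQcont : ContinuousOn
      (fun x : ℝ × (EuclideanSpace ℝ (Fin d) × EuclideanSpace ℝ (Fin d)) => Q x.1 x.2)
      (Set.Icc 0 1 ×ˢ Set.univ))
    (hQdiff : ∀ τ ∈ Set.Icc (0:ℝ) 1, Differentiable ℝ (Q τ))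
    (hQderiv : ContinuousOn
      (fun x : ℝ × (EuclideanSpace ℝ (Fin d) × EuclideanSpace ℝ (Fin d)) =>
        fderiv ℝ (Q x.1) x.2)
      (Set.Icc 0 1 ×ˢ Set.univ))
    (hQ : ∀ τ ∈ Set.Icc (0:ℝ) 1, ∀ p q : EuclideanSpace ℝ (Fin d),
      Q τ (p, q) = q + (h * C τ) • p + (h ^ 2) • ∫ σ in (0:ℝ)..1, A τ σ • f (Q σ (p, q)))
    (Φ : EuclideanSpace ℝ (Fin d) × EuclideanSpace ℝ (Fin d) →
      EuclideanSpace ℝ (Fin d) × EuclideanSpace ℝ (Fin d))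
    (hΦ : ∀ p q : EuclideanSpace ℝ (Fin d),
      Φ (p, q) = (p + h • ∫ τ in (0:ℝ)..1, Bhat τ • f (Q τ (p, q)),
                  q + h • p + (h ^ 2) • ∫ τ in (0:ℝ)..1, Bbar τ • f (Q τ (p, q)))) :
    ∀ z u v : EuclideanSpace ℝ (Fin d) × EuclideanSpace ℝ (Fin d),
      (inner ℝ (fderiv ℝ Φ z u).1 (fderiv ℝ Φ z v).2 : ℝ) -
          (inner ℝ (fderiv ℝ Φ z v).1 (fderiv ℝ Φ z u).2 : ℝ) =
        (inner ℝ u.1 v.2 : ℝ) - (inner ℝ v.1 u.2 : ℝ) := by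
  intro z u v
  -- smoothness of f
  have hdV : ContDiff ℝ 1 (fderiv ℝ V) := hV.fderiv_right (by norm_num)
  have hgradC : ContDiff ℝ 1 (gradient V) := by
    have h2 : gradient V = fun x => (InnerProductSpace.toDual ℝ
        (EuclideanSpace ℝ (Fin d))).symm (fderiv ℝ V x) := rfl
    rw [h2]
    exact ((InnerProductSpace.toDual ℝ _).symm.contDiff).comp hdV
  have hfun : f = fun q => -gradient V q := funext hf
  have hfC : ContDiff ℝ 1 f := by rw [hfun]; exact hgradC.neg
  have hfd : Differentiable ℝ f := hfC.differentiable one_ne_zero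
  have hfdc : Continuous (fun q => fderiv ℝ f q) := hfC.continuous_fderiv one_ne_zero
  -- symmetry of the Hessian
  have hsymf : ∀ x w y : EuclideanSpace ℝ (Fin d),
      ⟪fderiv ℝ f x w, y⟫ = ⟪w, fderiv ℝ f x y⟫ := by
    intro x w y
    have hsnd : IsSymmSndFDerivAt ℝ V x := (hV.contDiffAt).isSymmSndFDerivAt (by simp [minSmoothness_of_isRCLikeNormedField])
    have hkey : ∀ w' y' : EuclideanSpace ℝ (Fin d),
        ⟪y', fderiv ℝ (gradient V) x w'⟫ = fderiv ℝ (fderiv ℝ V) x w' y' := by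
      intro w' y'
      have hpt : (fun t => (⟪y', gradient V t⟫ : ℝ)) = fun t => fderiv ℝ V t y' := by
        funext t
        rw [real_inner_comm]
        exact InnerProductSpace.toDual_symm_apply
      have h1 : HasFDerivAt (fun t => (⟪y', gradient V t⟫ : ℝ))
          ((innerSL ℝ y').comp (fderiv ℝ (gradient V) x)) x :=
        ((innerSL ℝ y').hasFDerivAt).comp x
          ((hgradC.differentiable one_ne_zero x).hasFDerivAt)
      have h2 : HasFDerivAt (fun t => fderiv ℝ V t y')
          ((ContinuousLinearMap.apply ℝ ℝ y').comp (fderiv ℝ (fderiv ℝ V) x)) x :=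
        ((ContinuousLinearMap.apply ℝ ℝ y').hasFDerivAt).comp x
          ((hdV.differentiable one_ne_zero x).hasFDerivAt)
      rw [hpt] at h1
      have h3 := h1.unique h2
      have h4 := congrArg (fun (L : _ →L[ℝ] ℝ) => L w') h3
      simp only [ContinuousLinearMap.comp_apply, innerSL_apply_apply,
        ContinuousLinearMap.apply_apply] at h4
      exact h4
    have hfx : fderiv ℝ f x = -fderiv ℝ (gradient V) x := by
      rw [hfun]; exact fderiv_neg
    rw [hfx]
    simp only [ContinuousLinearMap.neg_apply, inner_neg_left, inner_neg_right]
    rw [neg_inj]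
    rw [show (inner ℝ ((fderiv ℝ (gradient V) x) w) y : ℝ)
        = inner ℝ y ((fderiv ℝ (gradient V) x) w) from real_inner_comm _ _]
    rw [hkey w y, hsnd w y, ← hkey y w]
  -- continuity of stage data at `z`
  have hQz : ContinuousOn (fun τ => Q τ z) (Set.Icc 0 1) := slice_contOn hQcont z
  have hΨc : ContinuousOn (fun τ => fderiv ℝ (Q τ) z) (Set.Icc 0 1) := slice_contOn hQderiv z
  -- the derived stage vectors
  obtain ⟨a, ha⟩ : ∃ a : ℝ → EuclideanSpace ℝ (Fin d),
      ∀ τ, a τ = fderiv ℝ f (Q τ z) (fderiv ℝ (Q τ) z u) := ⟨_, fun _ => rfl⟩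
  obtain ⟨b, hb⟩ : ∃ b : ℝ → EuclideanSpace ℝ (Fin d),
      ∀ τ, b τ = fderiv ℝ f (Q τ z) (fderiv ℝ (Q τ) z v) := ⟨_, fun _ => rfl⟩
  have hacont : ContinuousOn a (Set.Icc 0 1) := by
    refine ContinuousOn.congr ?_ (fun τ _ => ha τ)
    exact (hfdc.comp_continuousOn hQz).clm_apply (hΨc.clm_apply continuousOn_const)
  have hbcont : ContinuousOn b (Set.Icc 0 1) := by
    refine ContinuousOn.congr ?_ (fun τ _ => hb τ)
    exact (hfdc.comp_continuousOn hQz).clm_apply (hΨc.clm_apply continuousOn_const)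
  -- derivative of parametrized integrals
  have keyD : ∀ c : ℝ → ℝ, ContinuousOn c (Set.Icc 0 1) →
      ∀ w₀ : EuclideanSpace ℝ (Fin d) × EuclideanSpace ℝ (Fin d),
      HasFDerivAt (fun w => ∫ τ in (0:ℝ)..1, c τ • f (Q τ w))
        (∫ τ in (0:ℝ)..1, c τ • ((fderiv ℝ f (Q τ w₀)).comp (fderiv ℝ (Q τ) w₀))) w₀ := by
    intro c hc w₀
    refine hasFDerivAt_param (F := fun τ w => c τ • f (Q τ w))
      (F' := fun τ w => c τ • ((fderiv ℝ f (Q τ w)).comp (fderiv ℝ (Q τ) w))) w₀ ?_ ?_ ?_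
    · exact ((hc.comp continuous_fst.continuousOn (fun x hx => hx.1)).smul
        (hfC.continuous.comp_continuousOn hQcont))
    · exact ((hc.comp continuous_fst.continuousOn (fun x hx => hx.1)).smul
        ((hfdc.comp_continuousOn hQcont).clm_comp hQderiv))
    · intro τ hτ w
      exact (((hfd (Q τ w)).hasFDerivAt.comp w ((hQdiff τ hτ) w).hasFDerivAt).const_smul (c τ))
  have hA_slice : ∀ τ ∈ Set.Icc (0:ℝ) 1, ContinuousOn (A τ) (Set.Icc 0 1) := by
    intro τ hτ
    exact hA.comp ((continuous_const.prodMk continuous_id).continuousOn)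
      (fun σ hσ => ⟨hτ, hσ⟩)
  have hIntc : ∀ c : ℝ → ℝ, ContinuousOn c (Set.Icc 0 1) →
      IntervalIntegrable (fun σ => c σ • ((fderiv ℝ f (Q σ z)).comp (fderiv ℝ (Q σ) z)))
        MeasureTheory.volume 0 1 :=
    fun c hc => contOn_Icc_intervalIntegrable
      (hc.smul ((hfdc.comp_continuousOn hQz).clm_comp hΨc))
  have hIntApply : ∀ c : ℝ → ℝ, ContinuousOn c (Set.Icc 0 1) →
      ∀ w : EuclideanSpace ℝ (Fin d) × EuclideanSpace ℝ (Fin d),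
      (∫ σ in (0:ℝ)..1, c σ • ((fderiv ℝ f (Q σ z)).comp (fderiv ℝ (Q σ) z))) w
        = ∫ σ in (0:ℝ)..1, c σ • fderiv ℝ f (Q σ z) (fderiv ℝ (Q σ) z w) := by
    intro c hc w
    rw [ContinuousLinearMap.intervalIntegral_apply (hIntc c hc) w]
    simp only [ContinuousLinearMap.smul_apply, ContinuousLinearMap.comp_apply]
  -- derivative of the stages at `z`
  have hΨgen : ∀ τ, τ ∈ Set.Icc (0:ℝ) 1 →
      ∀ w : EuclideanSpace ℝ (Fin d) × EuclideanSpace ℝ (Fin d),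
      fderiv ℝ (Q τ) z w = w.2 + (h * C τ) • w.1 +
        (h^2) • ∫ σ in (0:ℝ)..1, A τ σ • fderiv ℝ f (Q σ z) (fderiv ℝ (Q σ) z w) := by
    intro τ hτ w
    have hD : HasFDerivAt (Q τ)
        ((ContinuousLinearMap.snd ℝ (EuclideanSpace ℝ (Fin d)) (EuclideanSpace ℝ (Fin d)) +
          (h * C τ) • ContinuousLinearMap.fst ℝ (EuclideanSpace ℝ (Fin d))
            (EuclideanSpace ℝ (Fin d))) +
          (h^2) • ∫ σ in (0:ℝ)..1, A τ σ •
            ((fderiv ℝ f (Q σ z)).comp (fderiv ℝ (Q σ) z))) z := by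
      have hQfun : Q τ = fun w : EuclideanSpace ℝ (Fin d) × EuclideanSpace ℝ (Fin d) =>
          w.2 + (h * C τ) • w.1 + (h^2) • ∫ σ in (0:ℝ)..1, A τ σ • f (Q σ w) := by
        funext w'
        obtain ⟨p', q'⟩ := w'
        exact hQ τ hτ p' q'
      rw [hQfun]
      exact ((hasFDerivAt_snd.add (hasFDerivAt_fst.const_smul (h * C τ))).add
        ((keyD (A τ) (hA_slice τ hτ) z).const_smul (h^2)))
    rw [hD.fderiv]
    simp only [ContinuousLinearMap.add_apply, ContinuousLinearMap.smul_apply,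
      ContinuousLinearMap.coe_snd', ContinuousLinearMap.coe_fst']
    rw [hIntApply (A τ) (hA_slice τ hτ) w]
  have hΨu : ∀ τ, τ ∈ Set.Icc (0:ℝ) 1 →
      fderiv ℝ (Q τ) z u = u.2 + (h * C τ) • u.1 +
        (h^2) • ∫ σ in (0:ℝ)..1, A τ σ • a σ := by
    intro τ hτ
    have := hΨgen τ hτ u
    simp only [← ha] at this
    exact this
  have hΨv : ∀ τ, τ ∈ Set.Icc (0:ℝ) 1 →
      fderiv ℝ (Q τ) z v = v.2 + (h * C τ) • v.1 +
        (h^2) • ∫ σ in (0:ℝ)..1, A τ σ • b σ := by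
    intro τ hτ
    have := hΨgen τ hτ v
    simp only [← hb] at this
    exact this
  -- derivative of Φ at z
  have hfΦgen : ∀ w : EuclideanSpace ℝ (Fin d) × EuclideanSpace ℝ (Fin d),
      fderiv ℝ Φ z w =
      (w.1 + h • ∫ τ in (0:ℝ)..1, Bhat τ • fderiv ℝ f (Q τ z) (fderiv ℝ (Q τ) z w),
       w.2 + h • w.1 + (h^2) • ∫ τ in (0:ℝ)..1,
         Bbar τ • fderiv ℝ f (Q τ z) (fderiv ℝ (Q τ) z w)) := by
    intro w
    have hΦfun : Φ = fun w : EuclideanSpace ℝ (Fin d) × EuclideanSpace ℝ (Fin d) =>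
        (w.1 + h • ∫ τ in (0:ℝ)..1, Bhat τ • f (Q τ w),
         w.2 + h • w.1 + (h^2) • ∫ τ in (0:ℝ)..1, Bbar τ • f (Q τ w)) := by
      funext w'
      obtain ⟨p', q'⟩ := w'
      exact hΦ p' q'
    have hDΦ : HasFDerivAt Φ
        ((ContinuousLinearMap.fst ℝ (EuclideanSpace ℝ (Fin d)) (EuclideanSpace ℝ (Fin d)) +
            h • ∫ τ in (0:ℝ)..1, Bhat τ •
              ((fderiv ℝ f (Q τ z)).comp (fderiv ℝ (Q τ) z))).prod
         ((ContinuousLinearMap.snd ℝ (EuclideanSpace ℝ (Fin d)) (EuclideanSpace ℝ (Fin d)) +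
            h • ContinuousLinearMap.fst ℝ (EuclideanSpace ℝ (Fin d)) (EuclideanSpace ℝ (Fin d))) +
            (h^2) • ∫ τ in (0:ℝ)..1, Bbar τ •
              ((fderiv ℝ f (Q τ z)).comp (fderiv ℝ (Q τ) z)))) z := by
      rw [hΦfun]
      exact (HasFDerivAt.prodMk (hasFDerivAt_fst.add ((keyD Bhat hBhat z).const_smul h))
        ((hasFDerivAt_snd.add (hasFDerivAt_fst.const_smul h)).add
          ((keyD Bbar hBbar z).const_smul (h^2))))
    rw [hDΦ.fderiv]
    simp only [ContinuousLinearMap.prod_apply, ContinuousLinearMap.add_apply,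
      ContinuousLinearMap.coe_fst', ContinuousLinearMap.coe_snd',
      ContinuousLinearMap.smul_apply]
    rw [hIntApply Bhat hBhat w, hIntApply Bbar hBbar w]
  have hfΦu : fderiv ℝ Φ z u =
      (u.1 + h • ∫ τ in (0:ℝ)..1, Bhat τ • a τ,
       u.2 + h • u.1 + (h^2) • ∫ τ in (0:ℝ)..1, Bbar τ • a τ) := by
    have := hfΦgen u
    simp only [← ha] at this
    exact this
  have hfΦv : fderiv ℝ Φ z v =
      (v.1 + h • ∫ τ in (0:ℝ)..1, Bhat τ • b τ,
       v.2 + h • v.1 + (h^2) • ∫ τ in (0:ℝ)..1, Bbar τ • b τ) := by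
    have := hfΦgen v
    simp only [← hb] at this
    exact this
  -- basic interval integrability facts
  have hIa : IntervalIntegrable (fun τ => Bhat τ • a τ) MeasureTheory.volume 0 1 :=
    contOn_Icc_intervalIntegrable (hBhat.smul hacont)
  have hIb : IntervalIntegrable (fun τ => Bhat τ • b τ) MeasureTheory.volume 0 1 :=
    contOn_Icc_intervalIntegrable (hBhat.smul hbcont)
  have hJa : IntervalIntegrable (fun τ => Bbar τ • a τ) MeasureTheory.volume 0 1 :=
    contOn_Icc_intervalIntegrable (hBbar.smul hacont)
  have hJb : IntervalIntegrable (fun τ => Bbar τ • b τ) MeasureTheory.volume 0 1 :=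
    contOn_Icc_intervalIntegrable (hBbar.smul hbcont)
  have hPc : ContinuousOn (fun p : ℝ × ℝ => (⟪a p.1, b p.2⟫ : ℝ))
      (Set.Icc 0 1 ×ˢ Set.Icc 0 1) :=
    (hacont.comp continuous_fst.continuousOn (fun p hp => hp.1)).inner
      (hbcont.comp continuous_snd.continuousOn (fun p hp => hp.2))
  have hPswap : ContinuousOn (fun p : ℝ × ℝ => (⟪a p.2, b p.1⟫ : ℝ))
      (Set.Icc 0 1 ×ˢ Set.Icc 0 1) :=
    hPc.comp continuous_swap.continuousOn (fun p hp => ⟨hp.2, hp.1⟩)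
  -- scalar integrability facts
  have i1 : IntervalIntegrable (fun τ => Bhat τ * ⟪a τ, v.2⟫) MeasureTheory.volume 0 1 :=
    contOn_Icc_intervalIntegrable (hBhat.mul (hacont.inner continuousOn_const))
  have i2 : IntervalIntegrable (fun τ => Bhat τ * ⟪b τ, u.2⟫) MeasureTheory.volume 0 1 :=
    contOn_Icc_intervalIntegrable (hBhat.mul (hbcont.inner continuousOn_const))
  have i3 : IntervalIntegrable (fun τ => Bbar τ * ⟪u.1, b τ⟫) MeasureTheory.volume 0 1 :=
    contOn_Icc_intervalIntegrable (hBbar.mul (continuousOn_const.inner hbcont))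
  have i3' : IntervalIntegrable (fun τ => Bhat τ * ⟪u.1, b τ⟫) MeasureTheory.volume 0 1 :=
    contOn_Icc_intervalIntegrable (hBhat.mul (continuousOn_const.inner hbcont))
  have i4 : IntervalIntegrable (fun τ => Bbar τ * ⟪a τ, v.1⟫) MeasureTheory.volume 0 1 :=
    contOn_Icc_intervalIntegrable (hBbar.mul (hacont.inner continuousOn_const))
  have i4' : IntervalIntegrable (fun τ => Bhat τ * ⟪a τ, v.1⟫) MeasureTheory.volume 0 1 :=
    contOn_Icc_intervalIntegrable (hBhat.mul (hacont.inner continuousOn_const))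
  have i34 : IntervalIntegrable (fun τ => (Bbar τ - Bhat τ) * ⟪u.1, b τ⟫)
      MeasureTheory.volume 0 1 :=
    contOn_Icc_intervalIntegrable ((hBbar.sub hBhat).mul (continuousOn_const.inner hbcont))
  have i44 : IntervalIntegrable (fun τ => (Bbar τ - Bhat τ) * ⟪a τ, v.1⟫)
      MeasureTheory.volume 0 1 :=
    contOn_Icc_intervalIntegrable ((hBbar.sub hBhat).mul (hacont.inner continuousOn_const))
  have haIA : ∀ τ ∈ Set.Icc (0:ℝ) 1,
      IntervalIntegrable (fun σ => A τ σ • a σ) MeasureTheory.volume 0 1 :=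
    fun τ hτ => contOn_Icc_intervalIntegrable ((hA_slice τ hτ).smul hacont)
  have hbIA : ∀ τ ∈ Set.Icc (0:ℝ) 1,
      IntervalIntegrable (fun σ => A τ σ • b σ) MeasureTheory.volume 0 1 :=
    fun τ hτ => contOn_Icc_intervalIntegrable ((hA_slice τ hτ).smul hbcont)
  have hIcc01 : Set.uIcc (0:ℝ) 1 = Set.Icc 0 1 := Set.uIcc_of_le zero_le_one
  -- conversion of inner products with integrals
  have e1 : (⟪(∫ τ in (0:ℝ)..1, Bhat τ • a τ), v.2⟫ : ℝ)
      = ∫ τ in (0:ℝ)..1, Bhat τ * ⟪a τ, v.2⟫ := by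
    refine (intervalIntegral_inner v.2 hIa).trans (intervalIntegral.integral_congr
      (fun τ _ => ?_))
    rw [real_inner_smul_left]
  have e2 : (⟪(∫ τ in (0:ℝ)..1, Bhat τ • b τ), u.2⟫ : ℝ)
      = ∫ τ in (0:ℝ)..1, Bhat τ * ⟪b τ, u.2⟫ := by
    refine (intervalIntegral_inner u.2 hIb).trans (intervalIntegral.integral_congr
      (fun τ _ => ?_))
    rw [real_inner_smul_left]
  have e3 : (⟪u.1, (∫ τ in (0:ℝ)..1, Bbar τ • b τ)⟫ : ℝ)
      = ∫ τ in (0:ℝ)..1, Bbar τ * ⟪u.1, b τ⟫ := by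
    refine (inner_intervalIntegral u.1 hJb).trans (intervalIntegral.integral_congr
      (fun τ _ => ?_))
    rw [real_inner_smul_right]
  have e3' : (⟪(∫ τ in (0:ℝ)..1, Bhat τ • b τ), u.1⟫ : ℝ)
      = ∫ τ in (0:ℝ)..1, Bhat τ * ⟪u.1, b τ⟫ := by
    refine (intervalIntegral_inner u.1 hIb).trans (intervalIntegral.integral_congr
      (fun τ _ => ?_))
    rw [real_inner_smul_left, real_inner_comm]
  have e4 : (⟪v.1, (∫ τ in (0:ℝ)..1, Bbar τ • a τ)⟫ : ℝ)
      = ∫ τ in (0:ℝ)..1, Bbar τ * ⟪a τ, v.1⟫ := by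
    refine (inner_intervalIntegral v.1 hJa).trans (intervalIntegral.integral_congr
      (fun τ _ => ?_))
    rw [real_inner_smul_right, real_inner_comm]
  have e4' : (⟪(∫ τ in (0:ℝ)..1, Bhat τ • a τ), v.1⟫ : ℝ)
      = ∫ τ in (0:ℝ)..1, Bhat τ * ⟪a τ, v.1⟫ := by
    refine (intervalIntegral_inner v.1 hIa).trans (intervalIntegral.integral_congr
      (fun τ _ => ?_))
    rw [real_inner_smul_left]
  have e5 : (⟪(∫ τ in (0:ℝ)..1, Bhat τ • a τ), (∫ τ in (0:ℝ)..1, Bbar τ • b τ)⟫ : ℝ)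
      = ∫ τ in (0:ℝ)..1, Bhat τ * ∫ σ in (0:ℝ)..1, Bbar σ * ⟪a τ, b σ⟫ := by
    refine (intervalIntegral_inner _ hIa).trans (intervalIntegral.integral_congr
      (fun τ _ => ?_))
    rw [real_inner_smul_left, inner_intervalIntegral (a τ) hJb]
    congr 1
    exact intervalIntegral.integral_congr (fun σ _ => by rw [real_inner_smul_right])
  have e6 : (⟪(∫ τ in (0:ℝ)..1, Bhat τ • b τ), (∫ τ in (0:ℝ)..1, Bbar τ • a τ)⟫ : ℝ)
      = ∫ τ in (0:ℝ)..1, Bhat τ * ∫ σ in (0:ℝ)..1, Bbar σ * ⟪a σ, b τ⟫ := by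
    refine (intervalIntegral_inner _ hIb).trans (intervalIntegral.integral_congr
      (fun τ _ => ?_))
    rw [real_inner_smul_left, inner_intervalIntegral (b τ) hJa]
    congr 1
    refine intervalIntegral.integral_congr (fun σ _ => ?_)
    rw [real_inner_smul_right, real_inner_comm]
  -- the pointwise identity coming from symmetry of the Hessian and condition (i)
  have ptwise : ∀ τ ∈ Set.Icc (0:ℝ) 1,
      Bhat τ * ⟪a τ, v.2⟫ - Bhat τ * ⟪b τ, u.2⟫ + h * ((Bbar τ - Bhat τ) * ⟪u.1, b τ⟫)
        - h * ((Bbar τ - Bhat τ) * ⟪a τ, v.1⟫)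
      = h^2 * (Bhat τ * (∫ σ in (0:ℝ)..1, A τ σ * ⟪a σ, b τ⟫)
          - Bhat τ * (∫ σ in (0:ℝ)..1, A τ σ * ⟪a τ, b σ⟫)) := by
    intro τ hτ
    have hs : (⟪a τ, fderiv ℝ (Q τ) z v⟫ : ℝ) = ⟪fderiv ℝ (Q τ) z u, b τ⟫ := by
      rw [ha τ, hb τ]
      exact hsymf (Q τ z) _ _
    rw [hΨu τ hτ, hΨv τ hτ] at hs
    simp only [inner_add_left, inner_add_right, real_inner_smul_left,
      real_inner_smul_right] at hs
    rw [inner_intervalIntegral (a τ) (hbIA τ hτ),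
      intervalIntegral_inner (b τ) (haIA τ hτ)] at hs
    simp only [real_inner_smul_left, real_inner_smul_right] at hs
    have h1 := hsym1 τ hτ
    have hcomm : (⟪b τ, u.2⟫ : ℝ) = ⟪u.2, b τ⟫ := real_inner_comm _ _
    linear_combination (Bhat τ) * hs - (Bhat τ) * hcomm
      + (h * ⟪a τ, v.1⟫ - h * ⟪u.1, b τ⟫) * h1
  -- merge the four order-h and h² integrals into one
  have merge1 :
      (∫ τ in (0:ℝ)..1, Bhat τ * ⟪a τ, v.2⟫) - (∫ τ in (0:ℝ)..1, Bhat τ * ⟪b τ, u.2⟫)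
      + h * (∫ τ in (0:ℝ)..1, (Bbar τ - Bhat τ) * ⟪u.1, b τ⟫)
      - h * (∫ τ in (0:ℝ)..1, (Bbar τ - Bhat τ) * ⟪a τ, v.1⟫)
      = ∫ τ in (0:ℝ)..1, (Bhat τ * ⟪a τ, v.2⟫ - Bhat τ * ⟪b τ, u.2⟫
          + h * ((Bbar τ - Bhat τ) * ⟪u.1, b τ⟫)
          - h * ((Bbar τ - Bhat τ) * ⟪a τ, v.1⟫)) := by
    rw [← intervalIntegral.integral_const_mul h, ← intervalIntegral.integral_const_mul h,
      ← intervalIntegral.integral_sub i1 i2,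
      ← intervalIntegral.integral_add (i1.sub i2) (i34.const_mul h),
      ← intervalIntegral.integral_sub ((i1.sub i2).add (i34.const_mul h)) (i44.const_mul h)]
  -- inner σ-integrals: continuity in τ
  have S1c : ContinuousOn (fun τ => ∫ σ in (0:ℝ)..1, A τ σ * ⟪a σ, b τ⟫)
      (Set.Icc 0 1) := contOn_param (hA.mul hPswap)
  have S2c : ContinuousOn (fun τ => ∫ σ in (0:ℝ)..1, A τ σ * ⟪a τ, b σ⟫)
      (Set.Icc 0 1) := contOn_param (hA.mul hPc)
  have T3c : ContinuousOn (fun τ => ∫ σ in (0:ℝ)..1, Bbar σ * ⟪a τ, b σ⟫)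
      (Set.Icc 0 1) :=
    contOn_param ((hBbar.comp continuous_snd.continuousOn (fun p hp => hp.2)).mul hPc)
  have T4c : ContinuousOn (fun τ => ∫ σ in (0:ℝ)..1, Bbar σ * ⟪a σ, b τ⟫)
      (Set.Icc 0 1) :=
    contOn_param ((hBbar.comp continuous_snd.continuousOn (fun p hp => hp.2)).mul hPswap)
  have j1 : IntervalIntegrable
      (fun τ => Bhat τ * ∫ σ in (0:ℝ)..1, A τ σ * ⟪a σ, b τ⟫) MeasureTheory.volume 0 1 :=
    contOn_Icc_intervalIntegrable (hBhat.mul S1c)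
  have j2 : IntervalIntegrable
      (fun τ => Bhat τ * ∫ σ in (0:ℝ)..1, A τ σ * ⟪a τ, b σ⟫) MeasureTheory.volume 0 1 :=
    contOn_Icc_intervalIntegrable (hBhat.mul S2c)
  have j3 : IntervalIntegrable
      (fun τ => Bhat τ * ∫ σ in (0:ℝ)..1, Bbar σ * ⟪a τ, b σ⟫) MeasureTheory.volume 0 1 :=
    contOn_Icc_intervalIntegrable (hBhat.mul T3c)
  have j4 : IntervalIntegrable
      (fun τ => Bhat τ * ∫ σ in (0:ℝ)..1, Bbar σ * ⟪a σ, b τ⟫) MeasureTheory.volume 0 1 :=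
    contOn_Icc_intervalIntegrable (hBhat.mul T4c)
  -- the middle integral via the pointwise identity
  have congr1 : (∫ τ in (0:ℝ)..1, (Bhat τ * ⟪a τ, v.2⟫ - Bhat τ * ⟪b τ, u.2⟫
          + h * ((Bbar τ - Bhat τ) * ⟪u.1, b τ⟫)
          - h * ((Bbar τ - Bhat τ) * ⟪a τ, v.1⟫)))
      = h^2 * ((∫ τ in (0:ℝ)..1, Bhat τ * ∫ σ in (0:ℝ)..1, A τ σ * ⟪a σ, b τ⟫)
          - (∫ τ in (0:ℝ)..1, Bhat τ * ∫ σ in (0:ℝ)..1, A τ σ * ⟪a τ, b σ⟫)) := by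
    rw [← intervalIntegral.integral_sub j1 j2, ← intervalIntegral.integral_const_mul]
    refine intervalIntegral.integral_congr (fun τ hτ => ?_)
    rw [hIcc01] at hτ
    have := ptwise τ hτ
    linarith [this]
  -- Fubini for the four double integrals
  have sw : ∀ p : ℝ × ℝ, Prod.swap p = (p.2, p.1) := fun p => rfl
  have hg1c : ContinuousOn (fun p : ℝ × ℝ => Bhat p.1 * (A p.1 p.2 * ⟪a p.2, b p.1⟫))
      (Set.Icc 0 1 ×ˢ Set.Icc 0 1) :=
    (hBhat.comp continuous_fst.continuousOn (fun p hp => hp.1)).mul (hA.mul hPswap)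
  have hg4c : ContinuousOn (fun p : ℝ × ℝ => Bhat p.1 * (Bbar p.2 * ⟪a p.2, b p.1⟫))
      (Set.Icc 0 1 ×ˢ Set.Icc 0 1) :=
    (hBhat.comp continuous_fst.continuousOn (fun p hp => hp.1)).mul
      ((hBbar.comp continuous_snd.continuousOn (fun p hp => hp.2)).mul hPswap)
  have push1 : (∫ τ in (0:ℝ)..1, Bhat τ * ∫ σ in (0:ℝ)..1, A τ σ * ⟪a σ, b τ⟫)
      = ∫ τ in (0:ℝ)..1, ∫ σ in (0:ℝ)..1, Bhat τ * (A τ σ * ⟪a σ, b τ⟫) :=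
    intervalIntegral.integral_congr
      (fun τ _ => (intervalIntegral.integral_const_mul _ _).symm)
  have push4 : (∫ τ in (0:ℝ)..1, Bhat τ * ∫ σ in (0:ℝ)..1, Bbar σ * ⟪a σ, b τ⟫)
      = ∫ τ in (0:ℝ)..1, ∫ σ in (0:ℝ)..1, Bhat τ * (Bbar σ * ⟪a σ, b τ⟫) :=
    intervalIntegral.integral_congr
      (fun τ _ => (intervalIntegral.integral_const_mul _ _).symm)
  have fub1 : (∫ τ in (0:ℝ)..1, ∫ σ in (0:ℝ)..1, Bhat τ * (A τ σ * ⟪a σ, b τ⟫))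
      = ∫ τ in (0:ℝ)..1, ∫ σ in (0:ℝ)..1, Bhat σ * (A σ τ * ⟪a τ, b σ⟫) :=
    swap01 hg1c
  have fub4 : (∫ τ in (0:ℝ)..1, ∫ σ in (0:ℝ)..1, Bhat τ * (Bbar σ * ⟪a σ, b τ⟫))
      = ∫ τ in (0:ℝ)..1, ∫ σ in (0:ℝ)..1, Bhat σ * (Bbar τ * ⟪a τ, b σ⟫) :=
    swap01 hg4c
  -- remaining double integrals with ⟪a τ, b σ⟫ and the final cancellation
  have W1c : ContinuousOn (fun τ => ∫ σ in (0:ℝ)..1, Bhat σ * (A σ τ * ⟪a τ, b σ⟫))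
      (Set.Icc 0 1) :=
    contOn_param ((hBhat.comp continuous_snd.continuousOn (fun p hp => hp.2)).mul
      (((hA.comp continuous_swap.continuousOn (fun p hp => ⟨hp.2, hp.1⟩)).mul hPc)))
  have W2c : ContinuousOn (fun τ => ∫ σ in (0:ℝ)..1, Bhat τ * (A τ σ * ⟪a τ, b σ⟫))
      (Set.Icc 0 1) :=
    contOn_param ((hBhat.comp continuous_fst.continuousOn (fun p hp => hp.1)).mul
      (hA.mul hPc))
  have W3c : ContinuousOn (fun τ => ∫ σ in (0:ℝ)..1, Bhat τ * (Bbar σ * ⟪a τ, b σ⟫))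
      (Set.Icc 0 1) :=
    contOn_param ((hBhat.comp continuous_fst.continuousOn (fun p hp => hp.1)).mul
      ((hBbar.comp continuous_snd.continuousOn (fun p hp => hp.2)).mul hPc))
  have W4c : ContinuousOn (fun τ => ∫ σ in (0:ℝ)..1, Bhat σ * (Bbar τ * ⟪a τ, b σ⟫))
      (Set.Icc 0 1) :=
    contOn_param ((hBhat.comp continuous_snd.continuousOn (fun p hp => hp.2)).mul
      ((hBbar.comp continuous_fst.continuousOn (fun p hp => hp.1)).mul hPc))
  have final4 :
      (∫ τ in (0:ℝ)..1, ∫ σ in (0:ℝ)..1, Bhat σ * (A σ τ * ⟪a τ, b σ⟫))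
      - (∫ τ in (0:ℝ)..1, ∫ σ in (0:ℝ)..1, Bhat τ * (A τ σ * ⟪a τ, b σ⟫))
      + (∫ τ in (0:ℝ)..1, ∫ σ in (0:ℝ)..1, Bhat τ * (Bbar σ * ⟪a τ, b σ⟫))
      - (∫ τ in (0:ℝ)..1, ∫ σ in (0:ℝ)..1, Bhat σ * (Bbar τ * ⟪a τ, b σ⟫)) = 0 := by
    rw [← intervalIntegral.integral_sub (contOn_Icc_intervalIntegrable W1c)
        (contOn_Icc_intervalIntegrable W2c),
      ← intervalIntegral.integral_add
        ((contOn_Icc_intervalIntegrable W1c).sub (contOn_Icc_intervalIntegrable W2c))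
        (contOn_Icc_intervalIntegrable W3c),
      ← intervalIntegral.integral_sub
        (((contOn_Icc_intervalIntegrable W1c).sub
          (contOn_Icc_intervalIntegrable W2c)).add (contOn_Icc_intervalIntegrable W3c))
        (contOn_Icc_intervalIntegrable W4c)]
    have : ∀ τ ∈ Set.Icc (0:ℝ) 1,
        ((∫ σ in (0:ℝ)..1, Bhat σ * (A σ τ * ⟪a τ, b σ⟫))
          - (∫ σ in (0:ℝ)..1, Bhat τ * (A τ σ * ⟪a τ, b σ⟫))
          + (∫ σ in (0:ℝ)..1, Bhat τ * (Bbar σ * ⟪a τ, b σ⟫)))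
          - (∫ σ in (0:ℝ)..1, Bhat σ * (Bbar τ * ⟪a τ, b σ⟫)) = 0 := by
      intro τ hτ
      have k1 : IntervalIntegrable (fun σ => Bhat σ * (A σ τ * ⟪a τ, b σ⟫))
          MeasureTheory.volume 0 1 :=
        contOn_Icc_intervalIntegrable (hBhat.mul
          ((hA.comp ((continuous_id.prodMk continuous_const).continuousOn)
            (fun σ hσ => ⟨hσ, hτ⟩)).mul (continuousOn_const.inner hbcont)))
      have k2 : IntervalIntegrable (fun σ => Bhat τ * (A τ σ * ⟪a τ, b σ⟫))
          MeasureTheory.volume 0 1 :=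
        contOn_Icc_intervalIntegrable (continuousOn_const.mul
          ((hA_slice τ hτ).mul (continuousOn_const.inner hbcont)))
      have k3 : IntervalIntegrable (fun σ => Bhat τ * (Bbar σ * ⟪a τ, b σ⟫))
          MeasureTheory.volume 0 1 :=
        contOn_Icc_intervalIntegrable (continuousOn_const.mul
          (hBbar.mul (continuousOn_const.inner hbcont)))
      have k4 : IntervalIntegrable (fun σ => Bhat σ * (Bbar τ * ⟪a τ, b σ⟫))
          MeasureTheory.volume 0 1 :=
        contOn_Icc_intervalIntegrable (hBhat.mul
          (continuousOn_const.mul (continuousOn_const.inner hbcont)))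
      rw [← intervalIntegral.integral_sub k1 k2,
        ← intervalIntegral.integral_add (k1.sub k2) k3,
        ← intervalIntegral.integral_sub ((k1.sub k2).add k3) k4]
      have hz : ∀ σ ∈ Set.Icc (0:ℝ) 1,
          Bhat σ * (A σ τ * ⟪a τ, b σ⟫) - Bhat τ * (A τ σ * ⟪a τ, b σ⟫)
            + Bhat τ * (Bbar σ * ⟪a τ, b σ⟫) - Bhat σ * (Bbar τ * ⟪a τ, b σ⟫) = 0 := by
        intro σ hσ
        have h2 := hsym2 τ hτ σ hσ
        linear_combination (⟪a τ, b σ⟫ : ℝ) * h2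
      rw [intervalIntegral.integral_congr (g := fun _ => (0:ℝ))
        (fun σ hσ => by rw [hIcc01] at hσ; exact hz σ hσ)]
      simp
    rw [intervalIntegral.integral_congr (g := fun _ => (0:ℝ))
      (fun τ hτ => this τ (by rwa [hIcc01] at hτ))]
    simp
  -- splitting of the (Bbar - Bhat) integrals
  have sp3 : (∫ τ in (0:ℝ)..1, (Bbar τ - Bhat τ) * ⟪u.1, b τ⟫)
      = (∫ τ in (0:ℝ)..1, Bbar τ * ⟪u.1, b τ⟫) - ∫ τ in (0:ℝ)..1, Bhat τ * ⟪u.1, b τ⟫ := by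
    rw [← intervalIntegral.integral_sub i3 i3']
    exact intervalIntegral.integral_congr (fun τ _ => by ring)
  have sp4 : (∫ τ in (0:ℝ)..1, (Bbar τ - Bhat τ) * ⟪a τ, v.1⟫)
      = (∫ τ in (0:ℝ)..1, Bbar τ * ⟪a τ, v.1⟫) - ∫ τ in (0:ℝ)..1, Bhat τ * ⟪a τ, v.1⟫ := by
    rw [← intervalIntegral.integral_sub i4 i4']
    exact intervalIntegral.integral_congr (fun τ _ => by ring)
  -- the grand cancellation
  have keyzero :
      (∫ τ in (0:ℝ)..1, Bhat τ * ⟪a τ, v.2⟫) - (∫ τ in (0:ℝ)..1, Bhat τ * ⟪b τ, u.2⟫)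
      + h * (∫ τ in (0:ℝ)..1, (Bbar τ - Bhat τ) * ⟪u.1, b τ⟫)
      - h * (∫ τ in (0:ℝ)..1, (Bbar τ - Bhat τ) * ⟪a τ, v.1⟫)
      + h^2 * ((∫ τ in (0:ℝ)..1, Bhat τ * ∫ σ in (0:ℝ)..1, Bbar σ * ⟪a τ, b σ⟫)
          - (∫ τ in (0:ℝ)..1, Bhat τ * ∫ σ in (0:ℝ)..1, Bbar σ * ⟪a σ, b τ⟫)) = 0 := by
    rw [merge1, congr1]
    have push2 : (∫ τ in (0:ℝ)..1, Bhat τ * ∫ σ in (0:ℝ)..1, A τ σ * ⟪a τ, b σ⟫)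
        = ∫ τ in (0:ℝ)..1, ∫ σ in (0:ℝ)..1, Bhat τ * (A τ σ * ⟪a τ, b σ⟫) :=
      intervalIntegral.integral_congr
        (fun τ _ => (intervalIntegral.integral_const_mul _ _).symm)
    have push3 : (∫ τ in (0:ℝ)..1, Bhat τ * ∫ σ in (0:ℝ)..1, Bbar σ * ⟪a τ, b σ⟫)
        = ∫ τ in (0:ℝ)..1, ∫ σ in (0:ℝ)..1, Bhat τ * (Bbar σ * ⟪a τ, b σ⟫) :=
      intervalIntegral.integral_congr
        (fun τ _ => (intervalIntegral.integral_const_mul _ _).symm)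
    rw [push1, push2, push3, push4, fub1, fub4]
    linear_combination (h^2) * final4
  -- finish
  rw [hfΦu, hfΦv]
  dsimp only
  simp only [inner_add_left, inner_add_right, real_inner_smul_left, real_inner_smul_right]
  linear_combination h * keyzero - h * (real_inner_comm u.1 v.1)
    + h * e1 - h * e2 + h^2 * e3 - h^2 * e3' + h^2 * e4' - h^2 * e4
    + h^3 * e5 - h^3 * e6 - h^2 * sp3 + h^2 * sp4
end

section
/- Let Ā : [0,1]×[0,1] → ℝ and B̄, B̂ : [0,1] → ℝ be continuous functions satisfying B̂(τ)(B̄(σ) − Ā(τ,σ)) = B̂(σ)(B̄(τ) − Ā(σ,τ)) for all τ, σ ∈ [0,1]. Let m ≥ 1, let ω : ℝ^m × ℝ^m → ℝ be a bilinear map that is skew-symmetric (ω(x,y) = −ω(y,x) for all x, y), and let g : [0,1] → ℝ^m be continuous. Then ∫₀¹ ∫₀¹ B̂(τ)·(B̄(σ) − Ā(τ,σ))·ω(g(τ), g(σ)) dσ dτ = 0. -/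
open intervalIntegral MeasureTheory

lemma bilin_continuous {m : ℕ} (ω : (Fin m → ℝ) →ₗ[ℝ] (Fin m → ℝ) →ₗ[ℝ] ℝ) :
    Continuous fun p : (Fin m → ℝ) × (Fin m → ℝ) => ω p.1 p.2 := by
  have h1 : Continuous fun x : Fin m → ℝ =>
      (LinearMap.toContinuousLinearMap (ω x) : (Fin m → ℝ) →L[ℝ] ℝ) := by
    have : IsLinearMap ℝ (fun x : Fin m → ℝ =>
        (LinearMap.toContinuousLinearMap (ω x) : (Fin m → ℝ) →L[ℝ] ℝ)) := by
      constructor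
      · intro a b; ext y; simp
      · intro c a; ext y; simp
    exact LinearMap.continuous_of_finiteDimensional (this.mk' _)
  have hb : IsBoundedBilinearMap ℝ
      (fun p : ((Fin m → ℝ) →L[ℝ] ℝ) × (Fin m → ℝ) => p.1 p.2) :=
    isBoundedBilinearMap_apply
  exact hb.continuous.comp ((h1.comp continuous_fst).prodMk continuous_snd)

/-- The key cancellation: under the symplectic condition on the
coefficients, the antisymmetrized double integral vanishes. -/
theorem csRKN_double_integral_cancellation
    (A : ℝ → ℝ → ℝ) (Bbar Bhat : ℝ → ℝ)
    (hA : ContinuousOn (fun x : ℝ × ℝ => A x.1 x.2) (Set.Icc 0 1 ×ˢ Set.Icc 0 1))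
    (hBbar : ContinuousOn Bbar (Set.Icc 0 1))
    (hBhat : ContinuousOn Bhat (Set.Icc 0 1))
    (hsym : ∀ τ ∈ Set.Icc (0:ℝ) 1, ∀ σ ∈ Set.Icc (0:ℝ) 1,
      Bhat τ * (Bbar σ - A τ σ) = Bhat σ * (Bbar τ - A σ τ))
    (m : ℕ) (hm : 1 ≤ m)
    (ω : (Fin m → ℝ) →ₗ[ℝ] (Fin m → ℝ) →ₗ[ℝ] ℝ)
    (hω : ∀ x y, ω x y = -ω y x)
    (g : ℝ → Fin m → ℝ) (hg : ContinuousOn g (Set.Icc 0 1)) :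
    ∫ τ in (0:ℝ)..1, ∫ σ in (0:ℝ)..1, Bhat τ * (Bbar σ - A τ σ) * ω (g τ) (g σ) = 0 := by
  set f : ℝ → ℝ → ℝ := fun τ σ => Bhat τ * (Bbar σ - A τ σ) * ω (g τ) (g σ) with hf
  have hS : Set.Ioc (0:ℝ) 1 ×ˢ Set.Ioc (0:ℝ) 1 ⊆ Set.Icc (0:ℝ) 1 ×ˢ Set.Icc (0:ℝ) 1 :=
    Set.prod_mono Set.Ioc_subset_Icc_self Set.Ioc_subset_Icc_self
  -- continuity of F on the square
  have hFc : ContinuousOn (fun p : ℝ × ℝ => f p.1 p.2)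
      (Set.Icc 0 1 ×ˢ Set.Icc 0 1) := by
    have hg1 : ContinuousOn (fun p : ℝ × ℝ => g p.1) (Set.Icc 0 1 ×ˢ Set.Icc 0 1) :=
      hg.comp continuous_fst.continuousOn (fun p hp => hp.1)
    have hg2 : ContinuousOn (fun p : ℝ × ℝ => g p.2) (Set.Icc 0 1 ×ˢ Set.Icc 0 1) :=
      hg.comp continuous_snd.continuousOn (fun p hp => hp.2)
    have hωg : ContinuousOn (fun p : ℝ × ℝ => ω (g p.1) (g p.2))
        (Set.Icc 0 1 ×ˢ Set.Icc 0 1) :=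
      (bilin_continuous ω).comp_continuousOn (hg1.prodMk hg2)
    exact (((hBhat.comp continuous_fst.continuousOn (fun p hp => hp.1)).mul
      ((hBbar.comp continuous_snd.continuousOn (fun p hp => hp.2)).sub hA)).mul hωg)
  have hInt : Integrable (fun p : ℝ × ℝ => f p.1 p.2)
      ((volume.restrict (Set.Ioc (0:ℝ) 1)).prod (volume.restrict (Set.Ioc (0:ℝ) 1))) := by
    rw [Measure.prod_restrict]
    exact ((hFc.integrableOn_compact
      (isCompact_Icc.prod isCompact_Icc)).mono_set hS)
  have hInt' : Integrable (fun p : ℝ × ℝ => f p.2 p.1)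
      ((volume.restrict (Set.Ioc (0:ℝ) 1)).prod (volume.restrict (Set.Ioc (0:ℝ) 1))) := by
    have := hInt.swap
    simpa [Function.comp_def] using this
  -- key pointwise antisymmetry
  have hanti : ∀ τ ∈ Set.Icc (0:ℝ) 1, ∀ σ ∈ Set.Icc (0:ℝ) 1, f τ σ = - f σ τ := by
    intro τ hτ σ hσ
    simp only [hf]
    rw [hsym τ hτ σ hσ, hω (g τ) (g σ)]
    ring
  set I := ∫ τ in Set.Ioc (0:ℝ) 1, ∫ σ in Set.Ioc (0:ℝ) 1, f τ σ with hI
  have hgoal : (∫ τ in (0:ℝ)..1, ∫ σ in (0:ℝ)..1, f τ σ) = I := by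
    rw [intervalIntegral.integral_of_le zero_le_one]
    refine setIntegral_congr_fun measurableSet_Ioc (fun τ _ => ?_)
    rw [intervalIntegral.integral_of_le zero_le_one]
  have hswap : I = ∫ σ in Set.Ioc (0:ℝ) 1, ∫ τ in Set.Ioc (0:ℝ) 1, f τ σ :=
    integral_integral_swap hInt
  have hneg : (∫ σ in Set.Ioc (0:ℝ) 1, ∫ τ in Set.Ioc (0:ℝ) 1, f τ σ) = -I := by
    have : (∫ σ in Set.Ioc (0:ℝ) 1, ∫ τ in Set.Ioc (0:ℝ) 1, f τ σ)
        = ∫ σ in Set.Ioc (0:ℝ) 1, ∫ τ in Set.Ioc (0:ℝ) 1, - f σ τ := by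
      refine setIntegral_congr_fun measurableSet_Ioc (fun σ hσ => ?_)
      refine setIntegral_congr_fun measurableSet_Ioc (fun τ hτ => ?_)
      exact hanti τ (Set.Ioc_subset_Icc_self hτ) σ (Set.Ioc_subset_Icc_self hσ)
    rw [this]
    simp_rw [MeasureTheory.integral_neg]
    rfl
  rw [hgoal]
  have : I = -I := hswap.trans hneg
  linarith
end

section
/- Let α : ℕ × ℕ → ℝ be finitely supported with α(0,1) − α(1,0) = −√3/6 and α(i,j) = α(j,i) whenever i + j > 1. Define Ā(τ,σ) = Σ_{i,j} α(i,j)·P_i(τ)·P_j(σ) for τ, σ ∈ [0,1], and set B̄(τ) = 1 − τ, B̂(τ) = 1, C(τ) = τ. Then these coefficients satisfy the symplectic conditions: (i) B̂(τ)(1 − C(τ)) = B̄(τ) for all τ ∈ [0,1]; (ii) B̂(τ)(B̄(σ) − Ā(τ,σ)) = B̂(σ)(B̄(τ) − Ā(σ,τ)) for all τ, σ ∈ [0,1]; equivalently, Ā(τ,σ) − Ā(σ,τ) = τ − σ for all τ, σ ∈ [0,1]. -/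
set_option maxHeartbeats 1000000

noncomputable def legP (n : ℕ) (x : ℝ) : ℝ :=
  Real.sqrt (2 * n + 1) / n.factorial *
    iteratedDeriv n (fun t : ℝ => t ^ n * (t - 1) ^ n) x

lemma legP0 (x : ℝ) : legP 0 x = 1 := by
  simp [legP]

lemma legP1 (x : ℝ) : legP 1 x = Real.sqrt 3 * (2 * x - 1) := by
  have hd : HasDerivAt (fun t : ℝ => t ^ 1 * (t - 1) ^ 1) (1 * (x - 1) + x * 1) x := by
    simp only [pow_one]
    exact (hasDerivAt_id' x).mul ((hasDerivAt_id' x).sub_const 1)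
  have : deriv (fun t : ℝ => t ^ 1 * (t - 1) ^ 1) x = 2 * x - 1 := by
    rw [hd.deriv]; ring
  simp [legP, iteratedDeriv_one, this]
  ring

lemma key (α : (ℕ × ℕ) →₀ ℝ)
    (h1 : α (0, 1) - α (1, 0) = -(Real.sqrt 3) / 6)
    (h2 : ∀ i j : ℕ, 1 < i + j → α (i, j) = α (j, i)) (τ σ : ℝ) :
    ((α.sum fun p c => c * legP p.1 τ * legP p.2 σ) -
      (α.sum fun p c => c * legP p.1 σ * legP p.2 τ)) = τ - σ := by
  classical
  set S : Finset (ℕ × ℕ) :=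
    (α.support ∪ α.support.image Prod.swap) ∪ {(0, 1), (1, 0)} with hS
  have hsub : α.support ⊆ S := by
    intro p hp; simp [hS, hp]
  have hmemS : ∀ p : ℕ × ℕ, p ∈ S → p.swap ∈ S := by
    intro p hp
    simp only [hS, Finset.mem_union, Finset.mem_image, Finset.mem_insert,
      Finset.mem_singleton] at hp ⊢
    rcases hp with (hp | ⟨q, hq, rfl⟩) | hp | hp
    · exact Or.inl (Or.inr ⟨p, hp, rfl⟩)
    · simp [hq]
    · subst hp; simp
    · subst hp; simp
  have hext : ∀ x y : ℝ,
      (α.sum fun p c => c * legP p.1 x * legP p.2 y) =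
        ∑ p ∈ S, α p * legP p.1 x * legP p.2 y := by
    intro x y
    rw [Finsupp.sum]
    exact Finset.sum_subset hsub (by
      intro p _ hp
      rw [Finsupp.notMem_support_iff] at hp
      simp [hp])
  rw [hext, hext]
  have hre : (∑ p ∈ S, α p * legP p.1 σ * legP p.2 τ) =
      ∑ p ∈ S, α p.swap * legP p.1 τ * legP p.2 σ := by
    refine Finset.sum_nbij' (fun p => p.swap) (fun p => p.swap) ?_ ?_ ?_ ?_ ?_
    · intro p hp; exact hmemS p hp
    · intro p hp; exact hmemS p hp
    · intro p _; simp
    · intro p _; simp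
    · intro p _; simp only [Prod.fst_swap, Prod.snd_swap, Prod.swap_swap]; ring
  rw [hre, ← Finset.sum_sub_distrib]
  have hstep : (∑ p ∈ S, (α p * legP p.1 τ * legP p.2 σ -
        α p.swap * legP p.1 τ * legP p.2 σ)) =
      ∑ p ∈ ({(0, 1), (1, 0)} : Finset (ℕ × ℕ)),
        (α p * legP p.1 τ * legP p.2 σ - α p.swap * legP p.1 τ * legP p.2 σ) := by
    symm
    refine Finset.sum_subset ?_ ?_
    · intro p hp
      simp only [hS, Finset.mem_union]
      exact Or.inr hp
    · intro p hpS hp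
      simp only [Finset.mem_insert, Finset.mem_singleton] at hp
      push_neg at hp
      obtain ⟨h01, h10⟩ := hp
      have heq : α p = α p.swap := by
        by_cases hgt : 1 < p.1 + p.2
        · simpa [Prod.swap] using h2 p.1 p.2 hgt
        · obtain ⟨i, j⟩ := p
          simp only [Prod.mk.injEq, not_and, Ne, Prod.mk.injEq] at h01 h10
          simp only [not_lt] at hgt
          have hi : i = 0 := by omega
          have hj : j = 0 := by omega
          subst hi; subst hj; rfl
      rw [heq]; ring
  rw [hstep, Finset.sum_pair (by decide)]
  have s3 : Real.sqrt 3 * Real.sqrt 3 = 3 := Real.mul_self_sqrt (by norm_num)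
  norm_num [legP0, legP1]
  linear_combination (2 * Real.sqrt 3 * (σ - τ)) * h1 + ((τ - σ) / 3) * s3

/-- A Legendre expansion `Ā(τ,σ) = Σ α(i,j) P_i(τ) P_j(σ)` with
`α(0,1) − α(1,0) = −√3/6` and `α(i,j) = α(j,i)` for `i + j > 1`, together with
`B̄(τ) = 1 − τ`, `B̂ = 1`, `C(τ) = τ`, satisfies the symplectic conditions. -/
theorem legendre_expansion_symplectic
    (α : (ℕ × ℕ) →₀ ℝ)
    (h1 : α (0, 1) - α (1, 0) = -(Real.sqrt 3) / 6)
    (h2 : ∀ i j : ℕ, 1 < i + j → α (i, j) = α (j, i))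
    (A : ℝ → ℝ → ℝ)
    (hA : ∀ τ σ : ℝ, A τ σ = α.sum fun p c => c * legP p.1 τ * legP p.2 σ)
    (Bbar Bhat C : ℝ → ℝ)
    (hBbar : ∀ τ, Bbar τ = 1 - τ) (hBhat : ∀ τ, Bhat τ = 1) (hC : ∀ τ, C τ = τ) :
    (∀ τ ∈ Set.Icc (0:ℝ) 1, Bhat τ * (1 - C τ) = Bbar τ) ∧
    (∀ τ ∈ Set.Icc (0:ℝ) 1, ∀ σ ∈ Set.Icc (0:ℝ) 1,
      Bhat τ * (Bbar σ - A τ σ) = Bhat σ * (Bbar τ - A σ τ)) ∧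
    (∀ τ ∈ Set.Icc (0:ℝ) 1, ∀ σ ∈ Set.Icc (0:ℝ) 1, A τ σ - A σ τ = τ - σ) := by
  have hkey : ∀ τ σ : ℝ, A τ σ - A σ τ = τ - σ := by
    intro τ σ
    rw [hA, hA]
    exact key α h1 h2 τ σ
  refine ⟨fun τ _ => by rw [hBhat, hC, hBbar, one_mul],
    fun τ _ σ _ => ?_, fun τ _ σ _ => hkey τ σ⟩
  have := hkey τ σ
  rw [hBhat, hBhat, hBbar, hBbar, one_mul, one_mul]
  linarith
end

section
/- Let Ā : [0,1]×[0,1] → ℝ and B̄, B̂, C : [0,1] → ℝ satisfy the symplectic conditions (i) B̂(τ)(1 − C(τ)) = B̄(τ) for all τ ∈ [0,1] and (ii) B̂(τ)(B̄(σ) − Ā(τ,σ)) = B̂(σ)(B̄(τ) − Ā(σ,τ)) for all τ, σ ∈ [0,1]. Let r ≥ 1 and let b, c : Fin r → ℝ with c_i ∈ [0,1] for all i be the weights and nodes of a quadrature formula. Define the Runge–Kutta–Nyström coefficients a_{ij} = b_j·Ā(c_i, c_j), β̄_i = b_i·B̄(c_i), β̂_i = b_i·B̂(c_i), and γ_i =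 C(c_i). Then these coefficients satisfy the classical symplectic RKN conditions: β̄_i = β̂_i·(1 − γ_i) for all i, and β̂_i·(β̄_j − a_{ij}) = β̂_j·(β̄_i − a_{ji}) for all i, j. -/
/-- Applying a quadrature formula `(b_i, c_i)` to a csRKN method
satisfying the continuous symplectic conditions yields an RKN method satisfying the
classical symplectic RKN conditions. -/
theorem quadrature_preserves_symplecticity
    (A : ℝ → ℝ → ℝ) (Bbar Bhat C : ℝ → ℝ)
    (hsym1 : ∀ τ ∈ Set.Icc (0:ℝ) 1, Bhat τ * (1 - C τ) = Bbar τ)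
    (hsym2 : ∀ τ ∈ Set.Icc (0:ℝ) 1, ∀ σ ∈ Set.Icc (0:ℝ) 1,
      Bhat τ * (Bbar σ - A τ σ) = Bhat σ * (Bbar τ - A σ τ))
    (r : ℕ) (hr : 1 ≤ r)
    (b c : Fin r → ℝ) (hc : ∀ i, c i ∈ Set.Icc (0:ℝ) 1)
    (a : Fin r → Fin r → ℝ) (βbar βhat γ : Fin r → ℝ)
    (ha : ∀ i j, a i j = b j * A (c i) (c j))
    (hβbar : ∀ i, βbar i = b i * Bbar (c i))
    (hβhat : ∀ i, βhat i = b i * Bhat (c i))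
    (hγ : ∀ i, γ i = C (c i)) :
    (∀ i, βbar i = βhat i * (1 - γ i)) ∧
    (∀ i j, βhat i * (βbar j - a i j) = βhat j * (βbar i - a j i)) := by
  constructor
  · intro i
    rw [hβbar, hβhat, hγ, ← hsym1 (c i) (hc i)]; ring
  · intro i j
    have h := hsym2 (c i) (hc i) (c j) (hc j)
    rw [hβhat, hβhat, hβbar, hβbar, ha, ha]
    have : b i * Bhat (c i) * (b j * Bbar (c j) - b j * A (c i) (c j))
        = b i * b j * (Bhat (c i) * (Bbar (c j) - A (c i) (c j))) := by ring
    rw [this, h]; ring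
end

section
/- Let A, Â : [0,1]×[0,1] → ℝ and B : [0,1] → ℝ be continuous with ∫₀¹ B(τ) dτ = 1, and set C(τ) = ∫₀¹ A(τ,σ) dσ. Let h ∈ ℝ, let p, q ∈ ℝ^d, let g : [0,1] → ℝ^d be continuous, and suppose Q, P : [0,1] → ℝ^d are continuous and satisfy for all τ ∈ [0,1]: Q(τ) = q + h·∫₀¹ A(τ,σ)·P(σ) dσ and P(τ) = p + h·∫₀¹ Â(τ,σ)·g(σ) dσ. Define Ā(τ,ρ) = ∫₀¹ A(τ,σ)·Â(σ,ρ) dσ and B̄(σ) = ∫₀¹ B(τ)·Â(τ,σ) dτ. Then (1) for all τ ∈ [0,1]: Q(τ) = q + h·C(τ)·p + h²·∫₀¹ Ā(τ,ρ)·g(ρ) dρ, and (2) q + h·∫₀¹ B(τ)·P(τ) dτ = q + h·p + h²·∫₀¹ B̄(σ)·g(σ) dσ. -/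
open intervalIntegral

open MeasureTheory Set

lemma fubini_smul {d : ℕ} (F : ℝ → ℝ → ℝ)
    (hF : ContinuousOn (fun x : ℝ × ℝ => F x.1 x.2) (Set.Icc 0 1 ×ˢ Set.Icc 0 1))
    (g : ℝ → EuclideanSpace ℝ (Fin d)) (hg : ContinuousOn g (Set.Icc 0 1)) :
    (∫ s in (0:ℝ)..1, ∫ r in (0:ℝ)..1, F s r • g r)
      = ∫ r in (0:ℝ)..1, (∫ s in (0:ℝ)..1, F s r) • g r := by
  have hcont : ContinuousOn (fun x : ℝ × ℝ => F x.1 x.2 • g x.2)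
      (Set.Icc 0 1 ×ˢ Set.Icc 0 1) :=
    hF.smul (hg.comp continuous_snd.continuousOn (fun x hx => hx.2))
  have hint : Integrable (Function.uncurry fun s r => F s r • g r)
      ((volume.restrict (Set.Ioc (0:ℝ) 1)).prod (volume.restrict (Set.Ioc (0:ℝ) 1))) := by
    rw [Measure.prod_restrict]
    exact (hcont.integrableOn_compact (isCompact_Icc.prod isCompact_Icc)).mono_set
      (Set.prod_mono Set.Ioc_subset_Icc_self Set.Ioc_subset_Icc_self)
  have hswap := MeasureTheory.integral_integral_swap hint
  simp only [intervalIntegral.integral_of_le (zero_le_one' ℝ)]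
  rw [hswap]
  refine MeasureTheory.integral_congr_ae (Filter.Eventually.of_forall fun r => ?_)
  exact _root_.integral_smul_const _ _

lemma key_elim {d : ℕ} (W : ℝ → ℝ) (hW : ContinuousOn W (Set.Icc 0 1))
    (Ahat : ℝ → ℝ → ℝ)
    (hAhat : ContinuousOn (fun x : ℝ × ℝ => Ahat x.1 x.2) (Set.Icc 0 1 ×ˢ Set.Icc 0 1))
    (g : ℝ → EuclideanSpace ℝ (Fin d)) (hg : ContinuousOn g (Set.Icc 0 1))
    (h : ℝ) (p : EuclideanSpace ℝ (Fin d))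
    (P : ℝ → EuclideanSpace ℝ (Fin d)) (hPc : ContinuousOn P (Set.Icc 0 1))
    (hP : ∀ τ ∈ Set.Icc (0:ℝ) 1, P τ = p + h • ∫ σ in (0:ℝ)..1, Ahat τ σ • g σ) :
    (∫ σ in (0:ℝ)..1, W σ • P σ)
      = (∫ σ in (0:ℝ)..1, W σ) • p
        + h • ∫ ρ in (0:ℝ)..1, (∫ σ in (0:ℝ)..1, W σ * Ahat σ ρ) • g ρ := by
  have huIcc : Set.uIcc (0:ℝ) 1 = Set.Icc 0 1 := Set.uIcc_of_le zero_le_one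
  have hint1 : IntervalIntegrable (fun σ => W σ • p) volume 0 1 := by
    apply ContinuousOn.intervalIntegrable
    rw [huIcc]
    exact hW.smul continuousOn_const
  have hint2 : IntervalIntegrable (fun σ => W σ • (P σ - p)) volume 0 1 := by
    apply ContinuousOn.intervalIntegrable
    rw [huIcc]
    exact hW.smul (hPc.sub continuousOn_const)
  have step1 : (∫ σ in (0:ℝ)..1, W σ • P σ)
      = (∫ σ in (0:ℝ)..1, W σ • p) + ∫ σ in (0:ℝ)..1, W σ • (P σ - p) := by
    rw [← intervalIntegral.integral_add hint1 hint2]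
    apply intervalIntegral.integral_congr
    intro σ _
    simp [smul_sub]
  have step2 : (∫ σ in (0:ℝ)..1, W σ • (P σ - p))
      = ∫ σ in (0:ℝ)..1, h • ∫ ρ in (0:ℝ)..1, (W σ * Ahat σ ρ) • g ρ := by
    apply intervalIntegral.integral_congr
    intro σ hσ
    rw [huIcc] at hσ
    show W σ • (P σ - p) = h • ∫ ρ in (0:ℝ)..1, (W σ * Ahat σ ρ) • g ρ
    rw [hP σ hσ]
    rw [add_sub_cancel_left, smul_comm]
    congr 1
    rw [← intervalIntegral.integral_smul]
    apply intervalIntegral.integral_congr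
    intro ρ _
    simp only [smul_smul]
  rw [step1, step2, intervalIntegral.integral_smul_const,
    intervalIntegral.integral_smul,
    fubini_smul (fun s r => W s * Ahat s r)
      ((hW.comp continuous_fst.continuousOn (fun x hx => hx.1)).mul hAhat) g hg]

/-- Eliminating the internal stage `P` from a continuous-stage
partitioned Runge–Kutta method yields the continuous-stage Runge–Kutta–Nyström form,
with `Ā(τ,ρ) = ∫₀¹ A(τ,σ)Â(σ,ρ) dσ` and `B̄(σ) = ∫₀¹ B(τ)Â(τ,σ) dτ`. -/
theorem csPRK_to_csRKN
    (d : ℕ) (A Ahat : ℝ → ℝ → ℝ) (B : ℝ → ℝ)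
    (hA : ContinuousOn (fun x : ℝ × ℝ => A x.1 x.2) (Set.Icc 0 1 ×ˢ Set.Icc 0 1))
    (hAhat : ContinuousOn (fun x : ℝ × ℝ => Ahat x.1 x.2) (Set.Icc 0 1 ×ˢ Set.Icc 0 1))
    (hB : ContinuousOn B (Set.Icc 0 1))
    (hBint : (∫ τ in (0:ℝ)..1, B τ) = 1)
    (C : ℝ → ℝ) (hC : ∀ τ, C τ = ∫ σ in (0:ℝ)..1, A τ σ)
    (h : ℝ) (p q : EuclideanSpace ℝ (Fin d))
    (g : ℝ → EuclideanSpace ℝ (Fin d)) (hg : ContinuousOn g (Set.Icc 0 1))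
    (Q P : ℝ → EuclideanSpace ℝ (Fin d))
    (hQc : ContinuousOn Q (Set.Icc 0 1)) (hPc : ContinuousOn P (Set.Icc 0 1))
    (hQ : ∀ τ ∈ Set.Icc (0:ℝ) 1, Q τ = q + h • ∫ σ in (0:ℝ)..1, A τ σ • P σ)
    (hP : ∀ τ ∈ Set.Icc (0:ℝ) 1, P τ = p + h • ∫ σ in (0:ℝ)..1, Ahat τ σ • g σ)
    (Abar : ℝ → ℝ → ℝ)
    (hAbar : ∀ τ ρ, Abar τ ρ = ∫ σ in (0:ℝ)..1, A τ σ * Ahat σ ρ)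
    (Bbar : ℝ → ℝ)
    (hBbar : ∀ σ, Bbar σ = ∫ τ in (0:ℝ)..1, B τ * Ahat τ σ) :
    (∀ τ ∈ Set.Icc (0:ℝ) 1,
        Q τ = q + (h * C τ) • p + (h ^ 2) • ∫ ρ in (0:ℝ)..1, Abar τ ρ • g ρ) ∧
    (q + h • ∫ τ in (0:ℝ)..1, B τ • P τ) =
      q + h • p + (h ^ 2) • ∫ σ in (0:ℝ)..1, Bbar σ • g σ := by
  constructor
  · intro τ hτ
    have hWτ : ContinuousOn (fun σ => A τ σ) (Set.Icc 0 1) := by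
      have : ContinuousOn (fun σ : ℝ => ((τ, σ) : ℝ × ℝ)) (Set.Icc 0 1) :=
        (continuous_const.prodMk continuous_id).continuousOn
      exact hA.comp this (fun σ hσ => ⟨hτ, hσ⟩)
    have hk := key_elim (fun σ => A τ σ) hWτ Ahat hAhat g hg h p P hPc hP
    rw [hQ τ hτ, hk]
    have h1 : (∫ σ in (0:ℝ)..1, A τ σ) = C τ := (hC τ).symm
    have h2 : (∫ ρ in (0:ℝ)..1, (∫ σ in (0:ℝ)..1, A τ σ * Ahat σ ρ) • g ρ)
        = ∫ ρ in (0:ℝ)..1, Abar τ ρ • g ρ := by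
      apply intervalIntegral.integral_congr
      intro ρ _
      simp only [hAbar]
    rw [h1, h2, smul_add, smul_smul, smul_smul, add_assoc, sq]
  · have hk := key_elim B hB Ahat hAhat g hg h p P hPc hP
    rw [hk, hBint]
    have h2 : (∫ ρ in (0:ℝ)..1, (∫ σ in (0:ℝ)..1, B σ * Ahat σ ρ) • g ρ)
        = ∫ σ in (0:ℝ)..1, Bbar σ • g σ := by
      apply intervalIntegral.integral_congr
      intro ρ _
      simp only [hBbar]
    rw [h2, one_smul, smul_add, smul_smul, add_assoc, sq]
end

section
/- Let α : ℕ × ℕ → ℝ be finitely supported with α(0,0) = 1/6, α(1,0) = √3/12, α(0,1) = −√3/12, α(2,0) = α(0,2) = √5/60, and α(0,j) = α(j,0) for all j > 2, and define Ā(τ,σ) = Σ_{i,j} α(i,j)·P_i(τ)·P_j(σ). If ∫₀¹ ∫₀¹ ∫₀¹ Ā(τ,σ)·Ā(σ,ρ) dρ dσ dτ = 1/120, then α(0,j) = α(j,0) = 0 for all j > 2. -/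
open intervalIntegral

namespace Order5Aux

open Polynomial

noncomputable def pp (n : ℕ) : ℝ[X] := X ^ n * (X - C 1) ^ n
noncomputable def qq (n : ℕ) : ℝ[X] := derivative^[n] (pp n)

lemma pp_monic (n : ℕ) : (pp n).Monic := (monic_X_pow n).mul ((monic_X_sub_C 1).pow n)

lemma pp_natDegree (n : ℕ) : (pp n).natDegree = 2 * n := by
  rw [pp, Polynomial.Monic.natDegree_mul (monic_X_pow n) ((monic_X_sub_C 1).pow n),
    natDegree_X_pow, natDegree_pow, natDegree_X_sub_C]
  ring

lemma iteratedDeriv_polyeval (P : ℝ[X]) (n : ℕ) :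
    iteratedDeriv n (fun t : ℝ => P.eval t) = fun x => (derivative^[n] P).eval x := by
  induction n with
  | zero => simp
  | succ n ih =>
    rw [iteratedDeriv_succ, ih, Function.iterate_succ_apply']
    funext x
    exact Polynomial.deriv (p := derivative^[n] P)

lemma legP_eq (n : ℕ) (x : ℝ) :
    legP n x = Real.sqrt (2 * n + 1) / n.factorial * (qq n).eval x := by
  have h : (fun t : ℝ => t ^ n * (t - 1) ^ n) = fun t : ℝ => (pp n).eval t := by
    funext t; simp [pp]
  rw [legP, h, qq, iteratedDeriv_polyeval]

lemma legP_continuous (n : ℕ) : Continuous (legP n) := by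
  have : legP n = fun x => Real.sqrt (2 * n + 1) / n.factorial * (qq n).eval x := by
    funext x; exact legP_eq n x
  rw [this]
  exact continuous_const.mul (qq n).continuous

lemma legP_zero (x : ℝ) : legP 0 x = 1 := by simp [legP]

lemma dvd_iterate_derivative {a : ℝ} {m : ℕ} {f : ℝ[X]} (h : (X - C a) ^ m ∣ f) (k : ℕ) :
    (X - C a) ^ (m - k) ∣ derivative^[k] f := by
  induction k with
  | zero => simpa using h
  | succ k ih =>
    rw [Function.iterate_succ_apply']
    obtain ⟨g, hg⟩ := ih
    rw [hg, derivative_mul, derivative_pow]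
    apply dvd_add
    · exact (pow_dvd_pow (X - C a) (by omega : m - (k+1) ≤ m - k - 1)).trans
        ⟨C ((m - k : ℕ) : ℝ) * derivative (X - C a) * g, by ring⟩
    · exact (pow_dvd_pow (X - C a) (by omega : m - (k+1) ≤ m - k)).trans
        (dvd_mul_right _ _)

lemma eval_iterate_deriv_eq_zero {a : ℝ} {m : ℕ} {f : ℝ[X]}
    (h : (X - C a) ^ m ∣ f) {k : ℕ} (hk : k < m) : (derivative^[k] f).eval a = 0 := by
  obtain ⟨g, hg⟩ := dvd_iterate_derivative h k
  rw [hg]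
  simp [eval_pow, zero_pow (by omega : m - k ≠ 0)]

lemma pp_boundary {n k : ℕ} (hk : k < n) :
    (derivative^[k] (pp n)).eval 0 = 0 ∧ (derivative^[k] (pp n)).eval 1 = 0 := by
  constructor
  · refine eval_iterate_deriv_eq_zero (a := 0) ?_ hk
    rw [C_0, sub_zero]; exact dvd_mul_right _ _
  · exact eval_iterate_deriv_eq_zero (a := 1) (dvd_mul_left _ _) hk

lemma ibp_step (f g : ℝ[X]) (h0 : f.eval 0 = 0) (h1 : f.eval 1 = 0) :
    ∫ x in (0:ℝ)..1, f.derivative.eval x * g.eval x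
      = - ∫ x in (0:ℝ)..1, f.eval x * g.derivative.eval x := by
  have key := intervalIntegral.integral_deriv_mul_eq_sub
    (u := fun x : ℝ => f.eval x) (v := fun x : ℝ => g.eval x)
    (u' := fun x : ℝ => f.derivative.eval x) (v' := fun x : ℝ => g.derivative.eval x)
    (fun x _ => f.hasDerivAt x) (fun x _ => g.hasDerivAt x)
    (f.derivative.continuous.intervalIntegrable 0 1)
    (g.derivative.continuous.intervalIntegrable 0 1)
  rw [intervalIntegral.integral_add (f := fun x => f.derivative.eval x * g.eval x)
    (g := fun x => f.eval x * g.derivative.eval x)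
    ((f.derivative.continuous.mul g.continuous).intervalIntegrable 0 1)
    ((f.continuous.mul g.derivative.continuous).intervalIntegrable 0 1)] at key
  simp only [h0, h1] at key
  linarith [key]

lemma ibp (m : ℕ) : ∀ (f g : ℝ[X]),
    (∀ k, k < m → (derivative^[k] f).eval 0 = 0 ∧ (derivative^[k] f).eval 1 = 0) →
    ∫ x in (0:ℝ)..1, (derivative^[m] f).eval x * g.eval x
      = (-1 : ℝ) ^ m * ∫ x in (0:ℝ)..1, f.eval x * (derivative^[m] g).eval x := by
  induction m with
  | zero => intro f g _; simp
  | succ m ih =>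
    intro f g h
    have hb : ∀ k, k < m → (derivative^[k] (derivative f)).eval 0 = 0 ∧
        (derivative^[k] (derivative f)).eval 1 = 0 := by
      intro k hk
      rw [← Function.iterate_succ_apply]
      exact h (k+1) (by omega)
    calc ∫ x in (0:ℝ)..1, (derivative^[m+1] f).eval x * g.eval x
        = ∫ x in (0:ℝ)..1, (derivative^[m] (derivative f)).eval x * g.eval x := by
          rw [Function.iterate_succ_apply]
      _ = (-1:ℝ)^m * ∫ x in (0:ℝ)..1, f.derivative.eval x * (derivative^[m] g).eval x :=
          ih (derivative f) g hb
      _ = (-1:ℝ)^m * -∫ x in (0:ℝ)..1, f.eval x * (derivative^[m] g).derivative.eval x := by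
          rw [ibp_step f (derivative^[m] g) (h 0 (by omega)).1 (h 0 (by omega)).2]
      _ = (-1:ℝ)^(m+1) * ∫ x in (0:ℝ)..1, f.eval x * (derivative^[m+1] g).eval x := by
          rw [Function.iterate_succ_apply']; ring

lemma int_qq_mul_qq_of_lt {j k : ℕ} (h : j < k) :
    ∫ x in (0:ℝ)..1, (qq j).eval x * (qq k).eval x = 0 := by
  have e1 : ∀ x : ℝ, (qq j).eval x * (qq k).eval x = (qq k).eval x * (qq j).eval x := by
    intro x; ring
  simp only [e1]
  rw [show qq k = derivative^[k] (pp k) from rfl,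
    ibp k (pp k) (qq j) (fun i hi => pp_boundary hi)]
  have hz : derivative^[k] (qq j) = 0 := by
    rw [show qq j = derivative^[j] (pp j) from rfl, ← Function.iterate_add_apply]
    exact iterate_derivative_eq_zero (by rw [pp_natDegree]; omega)
  rw [hz]
  simp

lemma int_legP_mul_legP {j k : ℕ} (h : j ≠ k) :
    ∫ x in (0:ℝ)..1, legP j x * legP k x = 0 := by
  have base : ∀ j k : ℕ, j < k → ∫ x in (0:ℝ)..1, legP j x * legP k x = 0 := by
    intro j k hjk
    have e : ∀ x : ℝ, legP j x * legP k x =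
        (Real.sqrt (2*j+1) / j.factorial * (Real.sqrt (2*k+1) / k.factorial)) *
          ((qq j).eval x * (qq k).eval x) := by
      intro x; rw [legP_eq, legP_eq]; ring
    simp only [e]
    rw [intervalIntegral.integral_const_mul, int_qq_mul_qq_of_lt hjk, mul_zero]
  rcases lt_or_gt_of_ne h with hlt | hgt
  · exact base j k hlt
  · have e : ∀ x : ℝ, legP j x * legP k x = legP k x * legP j x := fun x => by ring
    simp only [e]
    exact base k j hgt

lemma int_legP (i : ℕ) :
    ∫ x in (0:ℝ)..1, legP i x = if i = 0 then 1 else 0 := by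
  rcases Nat.eq_zero_or_pos i with h | h
  · subst h; simp [legP_zero]
  · rw [if_neg (by omega)]
    have e : ∀ x : ℝ, legP i x =
        (Real.sqrt (2*i+1) / i.factorial) * ((qq i).eval x * (1 : ℝ[X]).eval x) := by
      intro x; rw [legP_eq]; simp
    simp only [e]
    rw [intervalIntegral.integral_const_mul,
      show qq i = derivative^[i] (pp i) from rfl,
      ibp i (pp i) 1 (fun m hm => pp_boundary hm)]
    have : derivative^[i] (1 : ℝ[X]) = 0 :=
      iterate_derivative_eq_zero (by simpa using h)
    rw [this]
    simp

lemma qq_one_eval (x : ℝ) : (qq 1).eval x = 2 * x - 1 := by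
  simp [qq, pp]
  ring

lemma qq_two_eval (x : ℝ) : (qq 2).eval x = 12 * x ^ 2 - 12 * x + 2 := by
  show (derivative (derivative (pp 2))).eval x = _
  simp [pp, derivative_mul, derivative_pow]
  ring

lemma int_poly4 (c0 c1 c2 c3 c4 : ℝ) :
    ∫ x in (0:ℝ)..1, (c0 + c1*x + c2*x^2 + c3*x^3 + c4*x^4)
      = c0 + c1/2 + c2/3 + c3/4 + c4/5 := by
  have key : ∀ x ∈ Set.uIcc (0:ℝ) 1,
      HasDerivAt (fun x : ℝ => c0*x + c1*x^2/2 + c2*x^3/3 + c3*x^4/4 + c4*x^5/5)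
        (c0 + c1*x + c2*x^2 + c3*x^3 + c4*x^4) x := by
    intro x _
    have hsum := ((((((hasDerivAt_pow 1 x).const_mul c0).add
        (((hasDerivAt_pow 2 x).const_mul c1).div_const 2)).add
        (((hasDerivAt_pow 3 x).const_mul c2).div_const 3)).add
        (((hasDerivAt_pow 4 x).const_mul c3).div_const 4)).add
        (((hasDerivAt_pow 5 x).const_mul c4).div_const 5))
    refine (hsum.congr_deriv (by norm_num <;> ring)).congr_of_eventuallyEq
      (Filter.Eventually.of_forall fun y => ?_)
    simp only [Pi.add_apply]; ring
  rw [intervalIntegral.integral_eq_sub_of_hasDerivAt key (by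
    apply Continuous.intervalIntegrable; continuity)]
  norm_num

noncomputable def Nn (j : ℕ) : ℝ := ∫ x in (0:ℝ)..1, legP j x * legP j x

lemma Nn_zero : Nn 0 = 1 := by simp [Nn, legP_zero]

lemma Nn_one : Nn 1 = 1 := by
  have e : ∀ x : ℝ, legP 1 x * legP 1 x
      = 3 + (-12)*x + 12*x^2 + 0*x^3 + 0*x^4 := by
    intro x
    rw [legP_eq, qq_one_eval,
      show (2*((1:ℕ):ℝ)+1) = 3 by norm_num]
    have h3 : Real.sqrt 3 * Real.sqrt 3 = 3 := Real.mul_self_sqrt (by norm_num)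
    simp only [Nat.factorial_one, Nat.cast_one, div_one]
    linear_combination (2*x-1)*(2*x-1) * h3
  rw [Nn]
  simp only [e]
  rw [int_poly4]
  norm_num

lemma Nn_two : Nn 2 = 1 := by
  have e : ∀ x : ℝ, legP 2 x * legP 2 x
      = 5 + (-60)*x + 240*x^2 + (-360)*x^3 + 180*x^4 := by
    intro x
    rw [legP_eq, qq_two_eval,
      show (2*((2:ℕ):ℝ)+1) = 5 by norm_num,
      show ((Nat.factorial 2 : ℕ) : ℝ) = 2 by norm_num [Nat.factorial]]
    have h5 : Real.sqrt 5 * Real.sqrt 5 = 5 := Real.mul_self_sqrt (by norm_num)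
    linear_combination ((12*x^2-12*x+2)*(12*x^2-12*x+2)/4) * h5
  rw [Nn]
  simp only [e]
  rw [int_poly4]
  norm_num

lemma qq_ne_zero (n : ℕ) : qq n ≠ 0 := by
  intro h
  have hc : (qq n).coeff n = ((n + n).descFactorial n : ℝ) := by
    rw [qq, coeff_iterate_derivative]
    have : (pp n).coeff (n + n) = 1 := by
      have := (pp_monic n).leadingCoeff
      rwa [leadingCoeff, pp_natDegree, two_mul] at this
    rw [this]
    simp
  rw [h] at hc
  simp only [coeff_zero] at hc
  have : (n + n).descFactorial n ≠ 0 := by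
    rw [Ne, Nat.descFactorial_eq_zero_iff_lt]; omega
  exact this (by exact_mod_cast hc.symm)

lemma Nn_pos (j : ℕ) : 0 < Nn j := by
  obtain ⟨x, hx, hroot⟩ : ∃ x ∈ Set.Icc (0:ℝ) 1, ¬ IsRoot (qq j) x := by
    by_contra hcon
    push_neg at hcon
    exact (Set.Icc_infinite (by norm_num : (0:ℝ) < 1))
      ((Polynomial.finite_setOf_isRoot (qq_ne_zero j)).subset hcon)
  have hcont : Continuous (legP j) := legP_continuous j
  refine intervalIntegral.integral_pos (by norm_num) ((hcont.mul hcont).continuousOn)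
    (fun x _ => mul_self_nonneg _) ⟨x, hx, ?_⟩
  apply mul_self_pos.mpr
  rw [legP_eq]
  apply mul_ne_zero _ hroot
  have h1 : 0 < Real.sqrt (2 * j + 1) := Real.sqrt_pos.mpr (by positivity)
  have h2 : 0 < (j.factorial : ℝ) := by exact_mod_cast j.factorial_pos
  positivity

lemma int_legP_mul (j k : ℕ) :
    ∫ x in (0:ℝ)..1, legP j x * legP k x = if j = k then Nn j else 0 := by
  by_cases h : j = k
  · subst h; simp [Nn]
  · simp [h, int_legP_mul_legP h]

end Order5Aux

attribute [irreducible] legP Order5Aux.qq Order5Aux.pp Order5Aux.Nn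

set_option maxHeartbeats 1000000 in
/-- For a Legendre expansion with the prescribed low-order
coefficients and symmetric border coefficients `α(0,j) = α(j,0)` for `j > 2`, the
fifth-order condition `∫₀¹∫₀¹∫₀¹ Ā(τ,σ)Ā(σ,ρ) dρ dσ dτ = 1/120` forces
`α(0,j) = α(j,0) = 0` for all `j > 2`. -/
theorem order5_condition_thirteen
    (α : (ℕ × ℕ) →₀ ℝ)
    (h00 : α (0, 0) = 1 / 6)
    (h10 : α (1, 0) = Real.sqrt 3 / 12) (h01 : α (0, 1) = -(Real.sqrt 3) / 12)
    (h20 : α (2, 0) = Real.sqrt 5 / 60) (h02 : α (0, 2) = Real.sqrt 5 / 60)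
    (hsymm : ∀ j : ℕ, 2 < j → α (0, j) = α (j, 0))
    (A : ℝ → ℝ → ℝ)
    (hA : ∀ τ σ : ℝ, A τ σ = α.sum fun p c => c * legP p.1 τ * legP p.2 σ)
    (hint : (∫ τ in (0:ℝ)..1, ∫ σ in (0:ℝ)..1, ∫ ρ in (0:ℝ)..1, A τ σ * A σ ρ) = 1 / 120) :
    ∀ j : ℕ, 2 < j → α (0, j) = 0 ∧ α (j, 0) = 0 := by
  open Order5Aux in
  classical
  set s := α.support with hs
  have hA' : ∀ τ σ : ℝ, A τ σ = ∑ p ∈ s, α p * legP p.1 τ * legP p.2 σ := by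
    intro τ σ; rw [hA]; rfl
  -- inner integral
  have hI : ∀ σ : ℝ, (∫ ρ in (0:ℝ)..1, A σ ρ)
      = ∑ p ∈ s, α p * legP p.1 σ * (if p.2 = 0 then (1:ℝ) else 0) := by
    intro σ
    simp only [hA']
    rw [intervalIntegral.integral_finset_sum
      (f := fun (p : ℕ × ℕ) (ρ : ℝ) => α p * legP p.1 σ * legP p.2 ρ)
      (fun p _ => (continuous_const.mul (Order5Aux.legP_continuous p.2)).intervalIntegrable 0 1)]
    refine Finset.sum_congr rfl fun p _ => ?_
    rw [intervalIntegral.integral_const_mul, Order5Aux.int_legP]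
  have step1 : ∀ τ σ : ℝ, (∫ ρ in (0:ℝ)..1, A τ σ * A σ ρ)
      = A τ σ * ∑ p ∈ s, α p * legP p.1 σ * (if p.2 = 0 then (1:ℝ) else 0) := by
    intro τ σ
    rw [intervalIntegral.integral_const_mul, hI σ]
  have step2 : ∀ τ : ℝ, (∫ σ in (0:ℝ)..1,
        A τ σ * ∑ p ∈ s, α p * legP p.1 σ * (if p.2 = 0 then (1:ℝ) else 0))
      = ∑ p ∈ s, ∑ q ∈ s,
          ((α p * legP p.1 τ) * (α q * (if q.2 = 0 then (1:ℝ) else 0)))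
            * (if p.2 = q.1 then Order5Aux.Nn p.2 else 0) := by
    intro τ
    have expand : ∀ σ : ℝ,
        A τ σ * ∑ p ∈ s, α p * legP p.1 σ * (if p.2 = 0 then (1:ℝ) else 0)
        = ∑ p ∈ s, ∑ q ∈ s,
            ((α p * legP p.1 τ) * (α q * (if q.2 = 0 then (1:ℝ) else 0)))
              * (legP p.2 σ * legP q.1 σ) := by
      intro σ
      rw [hA', Finset.sum_mul_sum]
      refine Finset.sum_congr rfl fun p _ => Finset.sum_congr rfl fun q _ => ?_
      ring
    simp only [expand]
    rw [intervalIntegral.integral_finset_sum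
      (f := fun (p : ℕ × ℕ) (σ : ℝ) => ∑ q ∈ s,
        ((α p * legP p.1 τ) * (α q * (if q.2 = 0 then (1:ℝ) else 0)))
          * (legP p.2 σ * legP q.1 σ))
      (fun p _ =>
      (by
        apply Continuous.intervalIntegrable
        exact continuous_finset_sum _ fun q _ =>
          continuous_const.mul ((Order5Aux.legP_continuous p.2).mul
            (Order5Aux.legP_continuous q.1))))]
    refine Finset.sum_congr rfl fun p _ => ?_
    rw [intervalIntegral.integral_finset_sum
      (f := fun (q : ℕ × ℕ) (σ : ℝ) =>
        ((α p * legP p.1 τ) * (α q * (if q.2 = 0 then (1:ℝ) else 0)))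
          * (legP p.2 σ * legP q.1 σ))
      (fun q _ =>
      (continuous_const.mul ((Order5Aux.legP_continuous p.2).mul
        (Order5Aux.legP_continuous q.1))).intervalIntegrable 0 1)]
    refine Finset.sum_congr rfl fun q _ => ?_
    rw [intervalIntegral.integral_const_mul, Order5Aux.int_legP_mul]
  have step3 : (∫ τ in (0:ℝ)..1, ∑ p ∈ s, ∑ q ∈ s,
        ((α p * legP p.1 τ) * (α q * (if q.2 = 0 then (1:ℝ) else 0)))
          * (if p.2 = q.1 then Order5Aux.Nn p.2 else 0))
      = ∑ p ∈ s, ∑ q ∈ s,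
          ((α p * (α q * (if q.2 = 0 then (1:ℝ) else 0)))
            * (if p.2 = q.1 then Order5Aux.Nn p.2 else 0))
            * (if p.1 = 0 then (1:ℝ) else 0) := by
    rw [intervalIntegral.integral_finset_sum
      (f := fun (p : ℕ × ℕ) (τ : ℝ) => ∑ q ∈ s,
        ((α p * legP p.1 τ) * (α q * (if q.2 = 0 then (1:ℝ) else 0)))
          * (if p.2 = q.1 then Order5Aux.Nn p.2 else 0))
      (fun p _ =>
      (by
        apply Continuous.intervalIntegrable
        exact continuous_finset_sum _ fun q _ =>
          ((continuous_const.mul (Order5Aux.legP_continuous p.1)).mul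
            continuous_const).mul continuous_const))]
    refine Finset.sum_congr rfl fun p _ => ?_
    rw [intervalIntegral.integral_finset_sum
      (f := fun (q : ℕ × ℕ) (τ : ℝ) =>
        ((α p * legP p.1 τ) * (α q * (if q.2 = 0 then (1:ℝ) else 0)))
          * (if p.2 = q.1 then Order5Aux.Nn p.2 else 0))
      (fun q _ =>
      (((continuous_const.mul (Order5Aux.legP_continuous p.1)).mul
        continuous_const).mul continuous_const).intervalIntegrable 0 1)]
    refine Finset.sum_congr rfl fun q _ => ?_
    have e : ∀ τ : ℝ,
        ((α p * legP p.1 τ) * (α q * (if q.2 = 0 then (1:ℝ) else 0)))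
          * (if p.2 = q.1 then Order5Aux.Nn p.2 else 0)
        = ((α p * (α q * (if q.2 = 0 then (1:ℝ) else 0)))
            * (if p.2 = q.1 then Order5Aux.Nn p.2 else 0)) * legP p.1 τ := by
      intro τ; ring
    simp only [e]
    rw [intervalIntegral.integral_const_mul, Order5Aux.int_legP]
  simp only [step1] at hint
  simp only [step2] at hint
  rw [step3] at hint
  -- collapse the q-sum
  have hq : ∀ p ∈ s, (∑ q ∈ s,
      ((α p * (α q * (if q.2 = 0 then (1:ℝ) else 0)))
        * (if p.2 = q.1 then Order5Aux.Nn p.2 else 0))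
        * (if p.1 = 0 then (1:ℝ) else 0))
      = ((α p * α (p.2, 0)) * Order5Aux.Nn p.2) * (if p.1 = 0 then (1:ℝ) else 0) := by
    intro p _
    rw [Finset.sum_eq_single (p.2, 0)]
    · simp
    · intro q hq hne
      by_cases h2 : q.2 = 0
      · have h1 : ¬ (p.2 = q.1) := by
          intro h1
          exact hne (Prod.ext h1.symm h2)
        simp [h1]
      · simp [h2]
    · intro hmem
      have : α (p.2, 0) = 0 := Finsupp.notMem_support_iff.mp hmem
      simp [this]
  rw [Finset.sum_congr rfl hq] at hint
  -- rewrite as a sum over second indices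
  have hterm : ∀ p ∈ s,
      ((α p * α (p.2, 0)) * Order5Aux.Nn p.2) * (if p.1 = 0 then (1:ℝ) else 0)
      = if p.1 = 0 then (α p * α (p.2, 0)) * Order5Aux.Nn p.2 else 0 := by
    intro p _
    by_cases h : p.1 = 0 <;> simp [h]
  rw [Finset.sum_congr rfl hterm, ← Finset.sum_filter] at hint
  set t := (s.filter fun p : ℕ × ℕ => p.1 = 0).image Prod.snd with ht
  have hinj : ∀ p ∈ s.filter (fun p : ℕ × ℕ => p.1 = 0),
      ∀ q ∈ s.filter (fun p : ℕ × ℕ => p.1 = 0), p.2 = q.2 → p = q := by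
    intro p hp q hq h
    have hp1 := (Finset.mem_filter.mp hp).2
    have hq1 := (Finset.mem_filter.mp hq).2
    exact Prod.ext (hp1.trans hq1.symm) h
  have himg : ∑ j ∈ t, (α (0, j) * α (j, 0)) * Order5Aux.Nn j
      = ∑ p ∈ s.filter (fun p : ℕ × ℕ => p.1 = 0),
          (α (0, p.2) * α (p.2, 0)) * Order5Aux.Nn p.2 :=
    Finset.sum_image hinj
  have hre : ∑ p ∈ s.filter (fun p : ℕ × ℕ => p.1 = 0),
        (α (0, p.2) * α (p.2, 0)) * Order5Aux.Nn p.2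
      = ∑ p ∈ s.filter (fun p : ℕ × ℕ => p.1 = 0),
        (α p * α (p.2, 0)) * Order5Aux.Nn p.2 := by
    refine Finset.sum_congr rfl fun p hp => ?_
    have hp1 := (Finset.mem_filter.mp hp).2
    have : (0, p.2) = p := Prod.ext hp1.symm rfl
    rw [this]
  have hT : ∑ j ∈ t, (α (0, j) * α (j, 0)) * Order5Aux.Nn j = 1 / 120 := by
    rw [himg, hre, hint]
  -- split off j = 0, 1, 2
  have hmem0 : (0, 0) ∈ s := Finsupp.mem_support_iff.mpr (by rw [h00]; norm_num)
  have hs3 : Real.sqrt 3 ≠ 0 := by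
    have := Real.sqrt_pos.mpr (by norm_num : (3:ℝ) > 0); linarith
  have hs5 : Real.sqrt 5 ≠ 0 := by
    have := Real.sqrt_pos.mpr (by norm_num : (5:ℝ) > 0); linarith
  have hmem1 : (0, 1) ∈ s := Finsupp.mem_support_iff.mpr (by
    rw [h01]; simp [hs3])
  have hmem2 : (0, 2) ∈ s := Finsupp.mem_support_iff.mpr (by
    rw [h02]; simp [hs5])
  have hsub : ({0, 1, 2} : Finset ℕ) ⊆ t := by
    intro j hj
    simp only [Finset.mem_insert, Finset.mem_singleton] at hj
    rcases hj with rfl | rfl | rfl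
    · exact Finset.mem_image.mpr ⟨(0, 0), Finset.mem_filter.mpr ⟨hmem0, rfl⟩, rfl⟩
    · exact Finset.mem_image.mpr ⟨(0, 1), Finset.mem_filter.mpr ⟨hmem1, rfl⟩, rfl⟩
    · exact Finset.mem_image.mpr ⟨(0, 2), Finset.mem_filter.mpr ⟨hmem2, rfl⟩, rfl⟩
  have hsplit := Finset.sum_sdiff (f := fun j => (α (0, j) * α (j, 0)) * Order5Aux.Nn j) hsub
  have h012 : ∑ j ∈ ({0, 1, 2} : Finset ℕ), (α (0, j) * α (j, 0)) * Order5Aux.Nn j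
      = 1 / 120 := by
    rw [Finset.sum_insert (by decide), Finset.sum_insert (by decide),
      Finset.sum_singleton]
    rw [h00, h01, h10, h02, h20, Order5Aux.Nn_zero, Order5Aux.Nn_one, Order5Aux.Nn_two]
    have s3 : Real.sqrt 3 * Real.sqrt 3 = 3 := Real.mul_self_sqrt (by norm_num)
    have s5 : Real.sqrt 5 * Real.sqrt 5 = 5 := Real.mul_self_sqrt (by norm_num)
    linear_combination (-(1:ℝ)/144) * s3 + ((1:ℝ)/3600) * s5
  have hrest : ∑ j ∈ t \ {0, 1, 2}, (α (0, j) * α (j, 0)) * Order5Aux.Nn j = 0 := by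
    have := hsplit
    rw [hT, h012] at this
    linarith
  have hjgt : ∀ j ∈ t \ ({0, 1, 2} : Finset ℕ), 2 < j := by
    intro j hj
    have := (Finset.mem_sdiff.mp hj).2
    simp only [Finset.mem_insert, Finset.mem_singleton] at this
    omega
  have hnonneg : ∀ j ∈ t \ ({0, 1, 2} : Finset ℕ),
      0 ≤ (α (0, j) * α (j, 0)) * Order5Aux.Nn j := by
    intro j hj
    rw [hsymm j (hjgt j hj)]
    exact mul_nonneg (mul_self_nonneg _) (Order5Aux.Nn_pos j).le
  have hzero := (Finset.sum_eq_zero_iff_of_nonneg hnonneg).mp hrest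
  intro j hj
  have hα : α (0, j) = 0 := by
    by_cases hmem : (0, j) ∈ s
    · have hjt : j ∈ t := Finset.mem_image.mpr ⟨(0, j), Finset.mem_filter.mpr ⟨hmem, rfl⟩, rfl⟩
      have hjd : j ∈ t \ ({0, 1, 2} : Finset ℕ) := Finset.mem_sdiff.mpr ⟨hjt, by
        simp only [Finset.mem_insert, Finset.mem_singleton]
        omega⟩
      have h0 := hzero j hjd
      rw [hsymm j hj] at h0 ⊢
      by_contra hne
      have hp := mul_pos (mul_self_pos.mpr hne) (Order5Aux.Nn_pos j)
      nlinarith [hp, h0]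
    · exact Finsupp.notMem_support_iff.mp hmem
  exact ⟨hα, by rw [← hsymm j hj]; exact hα⟩
end

section
/- Consider the 2-stage tableau with nodes c₁ = 0, c₂ = 2/3 and entries ā₁₁ = 1/8 + α/4 − (√3/2)β + (3/4)γ, ā₁₂ = −1/8 + (3/4)α − (√3/2)β − (3/4)γ, ā₂₁ = 1/8 + α/4 − (√3/6)β − (1/4)γ, ā₂₂ = −1/8 + (3/4)α + (√3/2)β + (1/4)γ, for real parameters α, β, γ. Then ā₁₁ = ā₁₂ = ā₂₂ = 0 holds if and only if α = 1/8, β = √3/24, γ = −1/8, and in that case ā₂₁ = 1/6; together with b̄₁ = b̄₂ = 1/4, b₁ = 1/4, b₂ = 3/4, the resulting explicit tableau satisfies the symplectic RKN conditions b̄ᵢ = bᵢ(1 − cᵢ) and bᵢ(b̄ⱼ − ā_{ij}) = bⱼ(b̄ᵢ − ā_{ji}) for all i, j ∈ {1,2}, and the second-order conditions b₁ + b₂ = 1 and b₁c₁ + b₂c₂ = 1/2. -/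
/-- In the Radau-left-based two-stage family, the explicitness
conditions `ā₁₁ = ā₁₂ = ā₂₂ = 0` hold iff `α = 1/8`, `β = √3/24`, `γ = −1/8`; in that
case `ā₂₁ = 1/6` and the resulting explicit tableau satisfies the symplectic RKN
conditions and the second-order conditions. -/
theorem radau_left_explicit_symplectic
    (α β γ : ℝ) (a : Fin 2 → Fin 2 → ℝ) (bbar b c : Fin 2 → ℝ)
    (ha : a = ![![1 / 8 + α / 4 - (Real.sqrt 3 / 2) * β + (3 / 4) * γ,
                  -(1 / 8) + (3 / 4) * α - (Real.sqrt 3 / 2) * β - (3 / 4) * γ],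
                ![1 / 8 + α / 4 - (Real.sqrt 3 / 6) * β - (1 / 4) * γ,
                  -(1 / 8) + (3 / 4) * α + (Real.sqrt 3 / 2) * β + (1 / 4) * γ]])
    (hbbar : bbar = ![1 / 4, 1 / 4])
    (hb : b = ![1 / 4, 3 / 4])
    (hc : c = ![0, 2 / 3]) :
    ((a 0 0 = 0 ∧ a 0 1 = 0 ∧ a 1 1 = 0) ↔
      (α = 1 / 8 ∧ β = Real.sqrt 3 / 24 ∧ γ = -(1 / 8))) ∧
    ((α = 1 / 8 ∧ β = Real.sqrt 3 / 24 ∧ γ = -(1 / 8)) →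
      (a 1 0 = 1 / 6 ∧
       (∀ i, bbar i = b i * (1 - c i)) ∧
       (∀ i j, b i * (bbar j - a i j) = b j * (bbar i - a j i)) ∧
       b 0 + b 1 = 1 ∧
       b 0 * c 0 + b 1 * c 1 = 1 / 2)) := by
  have hs : Real.sqrt 3 ^ 2 = 3 := Real.sq_sqrt (by norm_num)
  subst ha hbbar hb hc
  simp only [Matrix.cons_val_zero, Matrix.cons_val_one, Matrix.head_cons,
    Matrix.head_fin_const]
  constructor
  · constructor
    · rintro ⟨h1, h2, h3⟩
      refine ⟨by linear_combination (1/4)*h1 + (1/2)*h2 + (3/4)*h3, ?_,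
        by linear_combination (3/4)*h1 - (1/2)*h2 + (1/4)*h3⟩
      linear_combination (-(Real.sqrt 3/4))*h1 + (-(Real.sqrt 3/6))*h2
        + (Real.sqrt 3/4)*h3 + (-(β/3))*hs
    · rintro ⟨rfl, rfl, rfl⟩
      refine ⟨by linear_combination (-(1:ℝ)/48)*hs,
        by linear_combination (-(1:ℝ)/48)*hs,
        by linear_combination ((1:ℝ)/48)*hs⟩
  · rintro ⟨rfl, rfl, rfl⟩
    refine ⟨by linear_combination (-(1:ℝ)/144)*hs, ?_, ?_, by norm_num, by norm_num⟩
    · intro i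
      fin_cases i <;> norm_num
    · intro i j
      fin_cases i <;> fin_cases j <;> simp
      all_goals nlinarith [hs]
end
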